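/- arXiv:1011.4539 — 2 statements merged into one kernel-verified Lean document; each statement's English description precedes it below -/
import Mathlib

section
/- Fix integers m, n ≥ 1 and r ≥ 0, and fix a set S of positions, S ⊆ {(i,j) : 1 ≤ i ≤ m, 1 ≤ j ≤ n}. Let #T_q be the number of m×n matrices A over F_q of rank r with A_{ij} = 0 for all (i,j) ∈ S, and let #T_1 be the number of m×n matrices with entries in {0,1} having exactly r entries equal to 1, no two of which lie in the same row or column, and whose entries at all positions of S are 0. Then #T_q ≡ #T_1 · (q−1)^r (mod (q−1)^{r+1}). -/
open Matrix Function

set_option linter.unusedSectionVars false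
set_option linter.unusedVariables false
set_option maxHeartbeats 1000000

section Helpers

variable {F : Type} [Field F] [Fintype F]

lemma exists_indep_cols {α β : Type*} [Fintype α] [Fintype β]
    (A : Matrix α β F) :
    ∃ g : Fin A.rank → β, Function.Injective g ∧
      LinearIndependent F (fun s => Aᵀ (g s)) := by
  classical
  obtain ⟨b, hbsub, hbspan, hbind⟩ := exists_linearIndependent F (Set.range Aᵀ)
  have hbfin : b.Finite := (Set.finite_range Aᵀ).subset hbsub
  haveI := hbfin.fintype
  have hcard : Fintype.card b = A.rank := by
    have h1 : A.rank = Module.finrank F (Submodule.span F b) := by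
      rw [rank_eq_finrank_span_cols, show A.col = Aᵀ from rfl, ← hbspan]
    rw [h1, finrank_span_set_eq_card hbind, Set.toFinset_card]
  let e : Fin A.rank ≃ b := (Fintype.equivFinOfCardEq hcard).symm
  choose j hj using fun v : b => hbsub v.2
  refine ⟨fun s => j (e s), ?_, ?_⟩
  · intro s s' h
    have h2 : ((e s : b) : α → F) = ((e s' : b) : α → F) := by
      rw [← hj (e s), ← hj (e s')]
      exact congrArg Aᵀ h
    exact e.injective (Subtype.ext h2)
  · have h3 : (fun s => Aᵀ (j (e s))) = fun s => ((e s : b) : α → F) := by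
      funext s; rw [hj]
    rw [h3]
    exact hbind.comp e e.injective

lemma exists_matching_of_rank {m n : ℕ} (A : Matrix (Fin m) (Fin n) F) :
    ∃ f : Fin A.rank → Fin m × Fin n,
      (∀ s, A (f s).1 (f s).2 ≠ 0) ∧
      Function.Injective (fun s => (f s).1) ∧
      Function.Injective (fun s => (f s).2) := by
  classical
  obtain ⟨g, hginj, hgli⟩ := exists_indep_cols A
  set B : Matrix (Fin m) (Fin A.rank) F := A.submatrix id g with hB
  have hBrank : B.rank = A.rank := by
    rw [rank_eq_finrank_span_cols]
    have h0 : Bᵀ = fun s => Aᵀ (g s) := by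
      funext s i; rfl
    rw [show B.col = Bᵀ from rfl, h0]
    simpa using finrank_span_eq_card hgli
  have hBtrank : Bᵀ.rank = A.rank := by rw [rank_transpose, hBrank]
  obtain ⟨g2, hg2inj, hg2li⟩ := exists_indep_cols Bᵀ
  let e : Fin A.rank ≃ Fin Bᵀ.rank := finCongr hBtrank.symm
  set C : Matrix (Fin A.rank) (Fin A.rank) F :=
    Matrix.of (fun s t => B (g2 (e s)) t) with hC
  have hCunit : IsUnit C := by
    rw [← linearIndependent_rows_iff_isUnit]
    have h1 : (fun s => C s) = (fun s' => Bᵀᵀ (g2 s')) ∘ e := by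
      funext s; ext t; simp [hC, Matrix.transpose_transpose]
    rw [show C.row = fun s => C s from rfl, h1]
    exact hg2li.comp e e.injective
  have hdet : C.det ≠ 0 := ((Matrix.isUnit_iff_isUnit_det C).mp hCunit).ne_zero
  have hperm : ∃ σ : Equiv.Perm (Fin A.rank), ∀ s, C (σ s) s ≠ 0 := by
    by_contra hc
    push_neg at hc
    apply hdet
    rw [Matrix.det_apply]
    refine Finset.sum_eq_zero fun σ _ => ?_
    obtain ⟨s, hs⟩ := hc σ
    have hz : ∏ i, C (σ i) i = 0 := Finset.prod_eq_zero (Finset.mem_univ s) hs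
    rw [hz, smul_zero]
  obtain ⟨σ, hσ⟩ := hperm
  refine ⟨fun s => (g2 (e (σ s)), g s), fun s => hσ s, ?_, ?_⟩
  · intro s s' h
    exact σ.injective (e.injective (hg2inj h))
  · intro s s' h
    exact hginj h

lemma rank_of_matching {m n : ℕ} (A : Matrix (Fin m) (Fin n) F)
    (hrow : ∀ i j j', A i j ≠ 0 → A i j' ≠ 0 → j = j')
    (hcol : ∀ i i' j, A i j ≠ 0 → A i' j ≠ 0 → i = i') :
    A.rank = Nat.card {p : Fin m × Fin n // A p.1 p.2 ≠ 0} := by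
  classical
  have hsingle : ∀ p : {p : Fin m × Fin n // A p.1 p.2 ≠ 0},
      Aᵀ (p : Fin m × Fin n).2 =
        Pi.single (p : Fin m × Fin n).1 (A (p : Fin m × Fin n).1 (p : Fin m × Fin n).2) := by
    intro p; funext i
    by_cases hi : i = (p : Fin m × Fin n).1
    · subst hi; simp [Matrix.transpose_apply]
    · have h0 : A i (p : Fin m × Fin n).2 = 0 := by
        by_contra h
        exact hi (hcol _ _ _ h p.2)
      rw [Matrix.transpose_apply, h0, Pi.single_eq_of_ne hi]
  have hfst : Function.Injective
      (fun p : {p : Fin m × Fin n // A p.1 p.2 ≠ 0} => (p : Fin m × Fin n).1) := by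
    intro p p' h
    have h' : (p : Fin m × Fin n).1 = (p' : Fin m × Fin n).1 := h
    have h2 : (p : Fin m × Fin n).2 = (p' : Fin m × Fin n).2 :=
      hrow _ _ _ p.2 (by rw [h']; exact p'.2)
    exact Subtype.ext (Prod.ext h' h2)
  set v : {p : Fin m × Fin n // A p.1 p.2 ≠ 0} → (Fin m → F) :=
    fun p => Aᵀ (p : Fin m × Fin n).2 with hv
  have hvli : LinearIndependent F v := by
    have h1 : LinearIndependent F
        (fun p : {p : Fin m × Fin n // A p.1 p.2 ≠ 0} =>
          (Pi.single ((p : Fin m × Fin n).1) (1 : F) : Fin m → F)) := by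
      have h2 := (Pi.basisFun F (Fin m)).linearIndependent.comp _ hfst
      convert h2 using 2 with p
      simp [Pi.basisFun_apply]
    have h3 := h1.units_smul
      (fun p => Units.mk0 (A (p : Fin m × Fin n).1 (p : Fin m × Fin n).2) p.2)
    convert h3 using 1
    funext p
    rw [hv]
    simp only []
    rw [hsingle p]
    funext i
    simp [Pi.single_apply, Pi.smul_apply', mul_ite]
  have hspan : Submodule.span F (Set.range Aᵀ) = Submodule.span F (Set.range v) := by
    apply le_antisymm
    · rw [Submodule.span_le]
      rintro _ ⟨jj, rfl⟩
      by_cases h : ∃ i, A i jj ≠ 0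
      · obtain ⟨i, hi⟩ := h
        have he : Aᵀ jj = v ⟨(i, jj), hi⟩ := rfl
        rw [he]
        exact Submodule.subset_span (Set.mem_range_self _)
      · push_neg at h
        have he : Aᵀ jj = 0 := by funext i; exact h i
        rw [he]
        exact Submodule.zero_mem _
    · rw [Submodule.span_le]
      rintro _ ⟨p, rfl⟩
      exact Submodule.subset_span ⟨(p : Fin m × Fin n).2, rfl⟩
  rw [rank_eq_finrank_span_cols, show A.col = Aᵀ from rfl, hspan, finrank_span_eq_card hvli]
  exact (Nat.card_eq_fintype_card).symm

section Scale

variable {m n : ℕ}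

def scaleMat (d1 : Fin m → Fˣ) (d2 : Fin n → Fˣ) (A : Matrix (Fin m) (Fin n) F) :
    Matrix (Fin m) (Fin n) F :=
  Matrix.of fun i j => (d1 i : F) * A i j * (d2 j : F)

lemma scaleMat_apply (d1 : Fin m → Fˣ) (d2 : Fin n → Fˣ) (A : Matrix (Fin m) (Fin n) F)
    (i : Fin m) (j : Fin n) : scaleMat d1 d2 A i j = (d1 i : F) * A i j * (d2 j : F) := rfl

lemma scaleMat_one (A : Matrix (Fin m) (Fin n) F) : scaleMat 1 1 A = A := by
  funext i j; simp [scaleMat_apply]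

lemma scaleMat_scaleMat (d1 e1 : Fin m → Fˣ) (d2 e2 : Fin n → Fˣ)
    (A : Matrix (Fin m) (Fin n) F) :
    scaleMat d1 d2 (scaleMat e1 e2 A) = scaleMat (d1 * e1) (d2 * e2) A := by
  funext i j; simp [scaleMat_apply]; ring

lemma scaleMat_ne_zero_iff (d1 : Fin m → Fˣ) (d2 : Fin n → Fˣ)
    (A : Matrix (Fin m) (Fin n) F) (i : Fin m) (j : Fin n) :
    scaleMat d1 d2 A i j ≠ 0 ↔ A i j ≠ 0 := by
  rw [not_iff_not]
  simp [scaleMat_apply, mul_eq_zero]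

lemma scaleMat_rank (d1 : Fin m → Fˣ) (d2 : Fin n → Fˣ) (A : Matrix (Fin m) (Fin n) F) :
    (scaleMat d1 d2 A).rank = A.rank := by
  classical
  have hd : scaleMat d1 d2 A =
      diagonal (fun i => (d1 i : F)) * A * diagonal (fun j => (d2 j : F)) := by
    funext i j
    simp [scaleMat_apply, Matrix.mul_diagonal, Matrix.diagonal_mul]
  have h1 : IsUnit (diagonal (fun i => (d1 i : F))).det := by
    rw [det_diagonal]
    exact IsUnit.of_mul_eq_one (∏ i, ((d1 i)⁻¹ : Fˣ) : F)
      (by rw [← Finset.prod_mul_distrib]; simp)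
  have h2 : IsUnit (diagonal (fun j => (d2 j : F))).det := by
    rw [det_diagonal]
    exact IsUnit.of_mul_eq_one (∏ j, ((d2 j)⁻¹ : Fˣ) : F)
      (by rw [← Finset.prod_mul_distrib]; simp)
  rw [hd, rank_mul_eq_left_of_isUnit_det _ _ h2, rank_mul_eq_right_of_isUnit_det _ _ h1]

end Scale

lemma free_dvd {G X : Type*} [Group G] [Finite G] [Finite X]
    (act : G →* Equiv.Perm X) (hfree : ∀ g x, act g x = x → g = 1) :
    Nat.card G ∣ Nat.card X := by
  classical
  letI := Fintype.ofFinite G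
  letI := Fintype.ofFinite X
  letI : MulAction G X := MulAction.compHom X act
  have hsmul : ∀ (g : G) (x : X), g • x = act g x := fun _ _ => rfl
  haveI : ∀ x : X, Fintype (MulAction.stabilizer G x) := fun x => Fintype.ofFinite _
  have key := MulAction.card_eq_sum_card_group_div_card_stabilizer G X
  have hstab : ∀ x : X, Fintype.card (MulAction.stabilizer G x) = 1 := by
    intro x
    rw [Fintype.card_eq_one_iff]
    refine ⟨1, fun g => Subtype.ext ?_⟩
    exact hfree g.1 x g.2
  rw [Nat.card_eq_fintype_card, Nat.card_eq_fintype_card, key]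
  simp only [hstab, Nat.div_one]
  rw [Finset.sum_const, Finset.card_univ, smul_eq_mul]
  exact Dvd.intro_left _ rfl

lemma dvd_card_scale {m n : ℕ} (Q : Matrix (Fin m) (Fin n) F → Prop)
    (hQ : ∀ (d1 : Fin m → Fˣ) (d2 : Fin n → Fˣ) A, Q A → Q (scaleMat d1 d2 A))
    (P : Finset (Fin m × Fin n))
    (G : Type) [Group G] [Finite G]
    (d1 : G → Fin m → Fˣ) (d2 : G → Fin n → Fˣ)
    (hd1mul : ∀ g h, d1 (g * h) = d1 g * d1 h)
    (hd2mul : ∀ g h, d2 (g * h) = d2 g * d2 h)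
    (hfree : ∀ g, (∀ p ∈ P, (d1 g p.1 : F) * (d2 g p.2 : F) = 1) → g = 1) :
    Nat.card G ∣ Nat.card {A : Matrix (Fin m) (Fin n) F //
      Q A ∧ ∀ p : Fin m × Fin n, A p.1 p.2 ≠ 0 ↔ p ∈ P} := by
  classical
  have hd1one : d1 1 = 1 := by
    have h := hd1mul 1 1
    rw [mul_one] at h
    exact (mul_left_cancel (a := d1 1) (by rw [← h, mul_one])).symm
  have hd2one : d2 1 = 1 := by
    have h := hd2mul 1 1
    rw [mul_one] at h
    exact (mul_left_cancel (a := d2 1) (by rw [← h, mul_one])).symm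
  set X := {A : Matrix (Fin m) (Fin n) F //
      Q A ∧ ∀ p : Fin m × Fin n, A p.1 p.2 ≠ 0 ↔ p ∈ P} with hX
  have hmem : ∀ (g : G) (A : X), Q (scaleMat (d1 g) (d2 g) A.1) ∧
      ∀ p : Fin m × Fin n, scaleMat (d1 g) (d2 g) A.1 p.1 p.2 ≠ 0 ↔ p ∈ P := by
    intro g A
    refine ⟨hQ _ _ _ A.2.1, fun p => ?_⟩
    rw [scaleMat_ne_zero_iff]
    exact A.2.2 p
  have hinv : ∀ g : G, d1 g⁻¹ = (d1 g)⁻¹ ∧ d2 g⁻¹ = (d2 g)⁻¹ := by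
    intro g
    constructor
    · apply eq_inv_of_mul_eq_one_left
      rw [← hd1mul, inv_mul_cancel, hd1one]
    · apply eq_inv_of_mul_eq_one_left
      rw [← hd2mul, inv_mul_cancel, hd2one]
  let act : G →* Equiv.Perm X :=
    { toFun := fun g =>
        { toFun := fun A => ⟨scaleMat (d1 g) (d2 g) A.1, hmem g A⟩
          invFun := fun A => ⟨scaleMat (d1 g⁻¹) (d2 g⁻¹) A.1, hmem g⁻¹ A⟩
          left_inv := by
            intro A
            apply Subtype.ext
            simp only [scaleMat_scaleMat]
            rw [(hinv g).1, (hinv g).2, inv_mul_cancel, inv_mul_cancel, scaleMat_one]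
          right_inv := by
            intro A
            apply Subtype.ext
            simp only [scaleMat_scaleMat]
            rw [(hinv g).1, (hinv g).2, mul_inv_cancel, mul_inv_cancel, scaleMat_one] }
      map_one' := by
        ext A
        simp [hd1one, hd2one, scaleMat_one]
      map_mul' := by
        intro g h
        ext A
        simp [scaleMat_scaleMat, hd1mul, hd2mul] }
  apply free_dvd act
  intro g x hgx
  apply hfree
  intro p hp
  have hx : scaleMat (d1 g) (d2 g) x.1 = x.1 := congrArg Subtype.val hgx
  have hne : x.1 p.1 p.2 ≠ 0 := (x.2.2 p).mpr hp
  have heq : (d1 g p.1 : F) * x.1 p.1 p.2 * (d2 g p.2 : F) = x.1 p.1 p.2 := by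
    conv_rhs => rw [← hx]
    rfl
  have heq2 : ((d1 g p.1 : F) * (d2 g p.2 : F)) * x.1 p.1 p.2 = 1 * x.1 p.1 p.2 := by
    rw [one_mul]; linear_combination heq
  exact mul_right_cancel₀ hne heq2


section PPMDefs
variable {m n : ℕ}

def PPM (r : ℕ) (S : Set (Fin m × Fin n)) (A : Matrix (Fin m) (Fin n) F) : Prop :=
  (∀ p ∈ S, A p.1 p.2 = 0) ∧
  (∀ i j j', A i j ≠ 0 → A i j' ≠ 0 → j = j') ∧
  (∀ i i' j, A i j ≠ 0 → A i' j ≠ 0 → i = i') ∧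
  Nat.card {p : Fin m × Fin n // A p.1 p.2 ≠ 0} = r


lemma ppm_scale_imp (r : ℕ) (S : Set (Fin m × Fin n)) (d1 : Fin m → Fˣ) (d2 : Fin n → Fˣ)
    (A : Matrix (Fin m) (Fin n) F) (h : PPM r S A) : PPM r S (scaleMat d1 d2 A) := by
  obtain ⟨h1, h2, h3, h4⟩ := h
  refine ⟨fun p hp => ?_, fun i j j' hj hj' => ?_, fun i i' j hi hi' => ?_, ?_⟩
  · rw [scaleMat_apply, h1 p hp, mul_zero, zero_mul]
  · exact h2 i j j' ((scaleMat_ne_zero_iff _ _ _ _ _).mp hj)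
      ((scaleMat_ne_zero_iff _ _ _ _ _).mp hj')
  · exact h3 i i' j ((scaleMat_ne_zero_iff _ _ _ _ _).mp hi)
      ((scaleMat_ne_zero_iff _ _ _ _ _).mp hi')
  · exact (Nat.card_congr (Equiv.subtypeEquivRight
      fun p : Fin m × Fin n => scaleMat_ne_zero_iff d1 d2 A p.1 p.2)).trans h4


end PPMDefs

lemma mycard_sigma {ι : Type*} [Fintype ι] (f : ι → Type*) [∀ i, Fintype (f i)] :
    Nat.card (Σ i, f i) = ∑ i, Nat.card (f i) := by
  simp [Nat.card_eq_fintype_card, Fintype.card_sigma]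

lemma t1_finite {m n r : ℕ} (S : Set (Fin m × Fin n)) :
    Finite {A : Matrix (Fin m) (Fin n) ℕ //
        (∀ i j, A i j = 0 ∨ A i j = 1) ∧
        Nat.card {p : Fin m × Fin n // A p.1 p.2 = 1} = r ∧
        (∀ i j j', A i j = 1 → A i j' = 1 → j = j') ∧
        (∀ i i' j, A i j = 1 → A i' j = 1 → i = i') ∧
        (∀ p ∈ S, A p.1 p.2 = 0)} := by
  apply Finite.of_injective
    (fun x => (Matrix.of fun i j => decide (x.1 i j = 1) : Matrix (Fin m) (Fin n) Bool))
  intro x y h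
  apply Subtype.ext
  funext i j
  have h1 : decide (x.1 i j = 1) = decide (y.1 i j = 1) := congrFun (congrFun h i) j
  rcases x.2.1 i j with hx | hx <;> rcases y.2.1 i j with hy | hy <;>
    simp [hx, hy] at h1 ⊢

lemma ppm_card {m n r : ℕ} (S : Set (Fin m × Fin n)) (q : ℕ) (hq : Fintype.card F = q) :
    Nat.card {A : Matrix (Fin m) (Fin n) F //
        (∀ p ∈ S, A p.1 p.2 = 0) ∧
        (∀ i j j', A i j ≠ 0 → A i j' ≠ 0 → j = j') ∧
        (∀ i i' j, A i j ≠ 0 → A i' j ≠ 0 → i = i') ∧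
        Nat.card {p : Fin m × Fin n // A p.1 p.2 ≠ 0} = r} =
      Nat.card {A : Matrix (Fin m) (Fin n) ℕ //
        (∀ i j, A i j = 0 ∨ A i j = 1) ∧
        Nat.card {p : Fin m × Fin n // A p.1 p.2 = 1} = r ∧
        (∀ i j j', A i j = 1 → A i j' = 1 → j = j') ∧
        (∀ i i' j, A i j = 1 → A i' j = 1 → i = i') ∧
        (∀ p ∈ S, A p.1 p.2 = 0)} * (q - 1) ^ r := by
  classical
  set T1 := {A : Matrix (Fin m) (Fin n) ℕ //
        (∀ i j, A i j = 0 ∨ A i j = 1) ∧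
        Nat.card {p : Fin m × Fin n // A p.1 p.2 = 1} = r ∧
        (∀ i j j', A i j = 1 → A i j' = 1 → j = j') ∧
        (∀ i i' j, A i j = 1 → A i' j = 1 → i = i') ∧
        (∀ p ∈ S, A p.1 p.2 = 0)} with hT1
  haveI : Finite T1 := t1_finite S
  haveI : Fintype T1 := Fintype.ofFinite T1
  -- the bijection
  have hmem : ∀ (B : T1) (v : {p : Fin m × Fin n // B.1 p.1 p.2 = 1} → Fˣ),
      (∀ p ∈ S, (fun i j => if h : B.1 i j = 1 then (v ⟨(i,j), h⟩ : F) else 0) p.1 p.2 = 0) ∧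
      (∀ i j j', (fun i j => if h : B.1 i j = 1 then (v ⟨(i,j), h⟩ : F) else 0) i j ≠ 0 →
        (fun i j => if h : B.1 i j = 1 then (v ⟨(i,j), h⟩ : F) else 0) i j' ≠ 0 → j = j') ∧
      (∀ i i' j, (fun i j => if h : B.1 i j = 1 then (v ⟨(i,j), h⟩ : F) else 0) i j ≠ 0 →
        (fun i j => if h : B.1 i j = 1 then (v ⟨(i,j), h⟩ : F) else 0) i' j ≠ 0 → i = i') ∧
      Nat.card {p : Fin m × Fin n //
        (fun i j => if h : B.1 i j = 1 then (v ⟨(i,j), h⟩ : F) else 0) p.1 p.2 ≠ 0} = r := by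
    intro B v
    obtain ⟨h01, hcard, hrow, hcol, havoid⟩ := B.2
    have key : ∀ i j, (if h : B.1 i j = 1 then (v ⟨(i,j), h⟩ : F) else 0) ≠ 0 ↔ B.1 i j = 1 := by
      intro i j
      by_cases h : B.1 i j = 1
      · simp [h, Units.ne_zero]
      · simp [h]
    refine ⟨fun p hp => ?_, fun i j j' h1 h2 => ?_, fun i i' j h1 h2 => ?_, ?_⟩
    · have : ¬ B.1 p.1 p.2 = 1 := by rw [havoid p hp]; omega
      simp [this]
    · exact hrow i j j' ((key i j).mp h1) ((key i j').mp h2)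
    · exact hcol i i' j ((key i j).mp h1) ((key i' j).mp h2)
    · exact (Nat.card_congr (Equiv.subtypeEquivRight fun p : Fin m × Fin n => key p.1 p.2)).trans hcard
  let φ : (Σ B : T1, ({p : Fin m × Fin n // B.1 p.1 p.2 = 1} → Fˣ)) →
      {A : Matrix (Fin m) (Fin n) F //
        (∀ p ∈ S, A p.1 p.2 = 0) ∧
        (∀ i j j', A i j ≠ 0 → A i j' ≠ 0 → j = j') ∧
        (∀ i i' j, A i j ≠ 0 → A i' j ≠ 0 → i = i') ∧
        Nat.card {p : Fin m × Fin n // A p.1 p.2 ≠ 0} = r} :=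
    fun x => ⟨Matrix.of (fun i j => if h : x.1.1 i j = 1 then (x.2 ⟨(i,j), h⟩ : F) else 0),
      hmem x.1 x.2⟩
  have hbij : Function.Bijective φ := by
    constructor
    · rintro ⟨⟨B, hB⟩, v⟩ ⟨⟨B', hB'⟩, v'⟩ h
      have hmat := congrArg Subtype.val h
      simp only [φ] at hmat
      have hBB : B = B' := by
        funext i j
        have h1 : (if h : B i j = 1 then (v ⟨(i,j), h⟩ : F) else 0) =
            (if h : B' i j = 1 then (v' ⟨(i,j), h⟩ : F) else 0) :=
          congrFun (congrFun hmat i) j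
        have k1 : (if h : B i j = 1 then (v ⟨(i,j), h⟩ : F) else 0) ≠ 0 ↔ B i j = 1 := by
          by_cases h : B i j = 1 <;> simp [h]
        have k2 : (if h : B' i j = 1 then (v' ⟨(i,j), h⟩ : F) else 0) ≠ 0 ↔ B' i j = 1 := by
          by_cases h : B' i j = 1 <;> simp [h]
        have e1 : B i j = 1 ↔ B' i j = 1 := by rw [← k1, ← k2, h1]
        rcases hB.1 i j with hx | hx <;> rcases hB'.1 i j with hy | hy
        · rw [hx, hy]
        · exfalso; rw [hx, hy] at e1; simp at e1
        · exfalso; rw [hx, hy] at e1; simp at e1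
        · rw [hx, hy]
      subst hBB
      have hvv : v = v' := by
        funext p
        apply Units.ext
        have h1 : (if h : B p.1.1 p.1.2 = 1 then (v ⟨(p.1.1, p.1.2), h⟩ : F) else 0) =
            (if h : B p.1.1 p.1.2 = 1 then (v' ⟨(p.1.1, p.1.2), h⟩ : F) else 0) :=
          congrFun (congrFun hmat p.1.1) p.1.2
        rw [dif_pos p.2, dif_pos p.2] at h1
        simpa using h1
      subst hvv
      rfl
    · rintro ⟨A, havoid, hrow, hcol, hcard⟩
      set B : Matrix (Fin m) (Fin n) ℕ := Matrix.of (fun i j => if A i j = 0 then 0 else 1)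
        with hBdef
      have key : ∀ i j, B i j = 1 ↔ A i j ≠ 0 := by
        intro i j
        by_cases h : A i j = 0 <;> simp [hBdef, h]
      have hBprop : (∀ i j, B i j = 0 ∨ B i j = 1) ∧
          Nat.card {p : Fin m × Fin n // B p.1 p.2 = 1} = r ∧
          (∀ i j j', B i j = 1 → B i j' = 1 → j = j') ∧
          (∀ i i' j, B i j = 1 → B i' j = 1 → i = i') ∧
          (∀ p ∈ S, B p.1 p.2 = 0) := by
        refine ⟨fun i j => ?_, ?_, fun i j j' h1 h2 => ?_, fun i i' j h1 h2 => ?_,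
          fun p hp => ?_⟩
        · by_cases h : A i j = 0 <;> simp [hBdef, h]
        · exact (Nat.card_congr (Equiv.subtypeEquivRight fun p : Fin m × Fin n => key p.1 p.2)).trans hcard
        · exact hrow i j j' ((key i j).mp h1) ((key i j').mp h2)
        · exact hcol i i' j ((key i j).mp h1) ((key i' j).mp h2)
        · simp [hBdef, havoid p hp]
      refine ⟨⟨⟨B, hBprop⟩, fun p => Units.mk0 (A p.1.1 p.1.2) ((key p.1.1 p.1.2).mp p.2)⟩, ?_⟩
      apply Subtype.ext
      funext i j
      simp only [φ, Matrix.of_apply]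
      by_cases h : B i j = 1
      · rw [dif_pos h]
        rfl
      · rw [dif_neg h]
        have := (key i j).not.mp h
        push_neg at this
        exact this.symm
  rw [← Nat.card_congr (Equiv.ofBijective φ hbij)]
  haveI : ∀ B : T1, Fintype ({p : Fin m × Fin n // B.1 p.1 p.2 = 1} → Fˣ) := by
    intro B
    haveI : Fintype Fˣ := Fintype.ofFinite _
    infer_instance
  rw [mycard_sigma]
  have hcardfun : ∀ B : T1, Nat.card ({p : Fin m × Fin n // B.1 p.1 p.2 = 1} → Fˣ) =
      (q - 1) ^ r := by
    intro B
    rw [Nat.card_fun, Nat.card_units, B.2.2.1, Nat.card_eq_fintype_card, hq]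
  simp only [hcardfun]
  rw [Finset.sum_const, Finset.card_univ, smul_eq_mul, Nat.card_eq_fintype_card]

lemma fiber_dvd {m n r : ℕ} (S : Set (Fin m × Fin n)) (q : ℕ) (hq : Fintype.card F = q)
    (P : Finset (Fin m × Fin n)) :
    (q - 1) ^ (r + 1) ∣ Nat.card {A : Matrix (Fin m) (Fin n) F //
      ((A.rank = r ∧ ∀ p ∈ S, A p.1 p.2 = 0) ∧ ¬ PPM r S A) ∧
      ∀ p : Fin m × Fin n, A p.1 p.2 ≠ 0 ↔ p ∈ P} := by
  classical
  set Q : Matrix (Fin m) (Fin n) F → Prop :=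
    fun A => (A.rank = r ∧ ∀ p ∈ S, A p.1 p.2 = 0) ∧ ¬ PPM r S A with hQdef
  have hQ : ∀ (d1 : Fin m → Fˣ) (d2 : Fin n → Fˣ) A, Q A → Q (scaleMat d1 d2 A) := by
    intro d1 d2 A hA
    obtain ⟨⟨hrk, hav⟩, hnp⟩ := hA
    refine ⟨⟨by rw [scaleMat_rank, hrk], fun p hp => ?_⟩, fun hp => ?_⟩
    · rw [scaleMat_apply, hav p hp, mul_zero, zero_mul]
    · apply hnp
      have h5 := ppm_scale_imp r S d1⁻¹ d2⁻¹ _ hp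
      rwa [scaleMat_scaleMat, inv_mul_cancel, inv_mul_cancel, scaleMat_one] at h5
  rcases isEmpty_or_nonempty {A : Matrix (Fin m) (Fin n) F //
      Q A ∧ ∀ p : Fin m × Fin n, A p.1 p.2 ≠ 0 ↔ p ∈ P} with hE | hNE
  · rw [Nat.card_of_isEmpty]
    exact dvd_zero _
  obtain ⟨⟨A0, hQ0, hsupp0⟩⟩ := hNE
  obtain ⟨f0, hf0ne, hf0r, hf0c⟩ := exists_matching_of_rank A0
  have hrk : A0.rank = r := hQ0.1.1
  let e : Fin r ≃ Fin A0.rank := finCongr hrk.symm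
  set f : Fin r → Fin m × Fin n := fun s => f0 (e s) with hfdef
  have hfne : ∀ s, A0 (f s).1 (f s).2 ≠ 0 := fun s => hf0ne (e s)
  have hfr : Function.Injective (fun s => (f s).1) := fun s s' h => e.injective (hf0r h)
  have hfc : Function.Injective (fun s => (f s).2) := fun s s' h => e.injective (hf0c h)
  have hfP : ∀ s, f s ∈ P := fun s => (hsupp0 (f s)).mp (hfne s)
  have hex : ∃ p0 ∈ P, ∀ s, f s ≠ p0 := by
    by_contra hc
    push_neg at hc
    apply hQ0.2
    refine ⟨hQ0.1.2, fun i j j' h1 h2 => ?_, fun i i' j h1 h2 => ?_, ?_⟩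
    · obtain ⟨s, hs⟩ := hc (i, j) ((hsupp0 (i, j)).mp h1)
      obtain ⟨s', hs'⟩ := hc (i, j') ((hsupp0 (i, j')).mp h2)
      have hss : s = s' := hfr (show (f s).1 = (f s').1 by rw [hs, hs'])
      have h5 : (f s).2 = j := by rw [hs]
      have h6 : (f s').2 = j' := by rw [hs']
      rw [← h5, ← h6, hss]
    · obtain ⟨s, hs⟩ := hc (i, j) ((hsupp0 (i, j)).mp h1)
      obtain ⟨s', hs'⟩ := hc (i', j) ((hsupp0 (i', j)).mp h2)
      have hss : s = s' := hfc (show (f s).2 = (f s').2 by rw [hs, hs'])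
      have h5 : (f s).1 = i := by rw [hs]
      have h6 : (f s').1 = i' := by rw [hs']
      rw [← h5, ← h6, hss]
    · have hiff : ∀ p : Fin m × Fin n, A0 p.1 p.2 ≠ 0 ↔ p ∈ Set.range f := by
        intro p
        constructor
        · intro h
          obtain ⟨s, hs⟩ := hc p ((hsupp0 p).mp h)
          exact ⟨s, hs⟩
        · rintro ⟨s, rfl⟩
          exact hfne s
      have hinj : Function.Injective f := fun s s' h => hfr (congrArg Prod.fst h)
      calc Nat.card {p : Fin m × Fin n // A0 p.1 p.2 ≠ 0}
          = Nat.card (Set.range f) :=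
            Nat.card_congr (Equiv.subtypeEquivRight fun p : Fin m × Fin n => hiff p)
        _ = r := by
            rw [Nat.card_range_of_injective hinj, Nat.card_eq_fintype_card, Fintype.card_fin]
  obtain ⟨p0, hp0P, hp0f⟩ := hex
  by_cases hcase : ∃ s0, (f s0).1 = p0.1
  · -- extra position in a matched row: scale matched rows and column p0.2
    obtain ⟨s0, hs0⟩ := hcase
    set d1 : ((Fin r → Fˣ) × Fˣ) → Fin m → Fˣ :=
      fun g i => ∏ s, if (f s).1 = i then g.1 s else 1 with hd1def
    set d2 : ((Fin r → Fˣ) × Fˣ) → Fin n → Fˣ :=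
      fun g j => if j = p0.2 then g.2 else 1 with hd2def
    have hd1val : ∀ (g : (Fin r → Fˣ) × Fˣ) (s : Fin r), d1 g (f s).1 = g.1 s := by
      intro g s
      rw [hd1def]
      refine Finset.prod_eq_single_of_mem s (Finset.mem_univ s) ?_ |>.trans (if_pos rfl)
      intro t _ hts
      exact if_neg (fun hh => hts (hfr hh))
    have hd1mul : ∀ g h, d1 (g * h) = d1 g * d1 h := by
      intro g h
      funext i
      rw [Pi.mul_apply, hd1def]
      simp only []
      rw [← Finset.prod_mul_distrib]
      refine Finset.prod_congr rfl fun s _ => ?_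
      by_cases hsi : (f s).1 = i <;> simp [hsi]
    have hd2mul : ∀ g h, d2 (g * h) = d2 g * d2 h := by
      intro g h
      funext j
      by_cases hj : j = p0.2 <;> simp [hd2def, hj]
    have hfree : ∀ g : (Fin r → Fˣ) × Fˣ,
        (∀ p ∈ P, (d1 g p.1 : F) * (d2 g p.2 : F) = 1) → g = 1 := by
      intro g hg
      have hne0 : (f s0).2 ≠ p0.2 := fun hh => hp0f s0 (Prod.ext hs0 hh)
      have hts0 : g.1 s0 = 1 := by
        have h1 := hg (f s0) (hfP s0)
        rw [hd1val] at h1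
        rw [hd2def] at h1
        simp only [if_neg hne0, Units.val_one, mul_one] at h1
        exact Units.val_eq_one.mp h1
      have hc1 : g.2 = 1 := by
        have h1 := hg p0 hp0P
        have h2 : d1 g p0.1 = g.1 s0 := by rw [← hs0, hd1val]
        rw [h2, hts0, hd2def] at h1
        simp only [if_pos rfl, Units.val_one, one_mul] at h1
        exact Units.val_eq_one.mp h1
      have ht : ∀ s, g.1 s = 1 := by
        intro s
        have h1 := hg (f s) (hfP s)
        have h2 : d2 g (f s).2 = 1 := by
          rw [hd2def]
          by_cases hh : (f s).2 = p0.2 <;> simp [hh, hc1]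
        rw [hd1val, h2] at h1
        simp only [Units.val_one, mul_one] at h1
        exact Units.val_eq_one.mp h1
      have : g.1 = 1 := funext ht
      exact Prod.ext this hc1
    have hdvd := dvd_card_scale Q hQ P ((Fin r → Fˣ) × Fˣ) d1 d2 hd1mul hd2mul hfree
    have hcardG : Nat.card ((Fin r → Fˣ) × Fˣ) = (q - 1) ^ (r + 1) := by
      rw [Nat.card_prod, Nat.card_fun, Nat.card_units,
        Nat.card_eq_fintype_card (α := F), hq, Nat.card_eq_fintype_card (α := Fin r),
        Fintype.card_fin, pow_succ]
    rwa [hcardG] at hdvd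
  · -- extra position in a new row: scale matched rows and row p0.1
    push_neg at hcase
    set p' : Fin (r + 1) → Fin m × Fin n := Fin.snoc f p0 with hp'def
    have hp'P : ∀ s, p' s ∈ P := by
      intro s
      refine Fin.lastCases ?_ ?_ s
      · rw [hp'def]; rw [Fin.snoc_last]; exact hp0P
      · intro t; rw [hp'def]; rw [Fin.snoc_castSucc]; exact hfP t
    have hp'r : Function.Injective (fun s => (p' s).1) := by
      intro s t h
      have h' : (p' s).1 = (p' t).1 := h
      rcases Fin.eq_castSucc_or_eq_last s with ⟨s', rfl⟩ | rfl <;>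
        rcases Fin.eq_castSucc_or_eq_last t with ⟨t', rfl⟩ | rfl
      · rw [hp'def, Fin.snoc_castSucc, Fin.snoc_castSucc] at h'
        exact congrArg Fin.castSucc (hfr h')
      · rw [hp'def, Fin.snoc_castSucc, Fin.snoc_last] at h'
        exact absurd h' (hcase s')
      · rw [hp'def, Fin.snoc_castSucc, Fin.snoc_last] at h'
        exact absurd h'.symm (hcase t')
      · rfl
    set d1 : (Fin (r + 1) → Fˣ) → Fin m → Fˣ :=
      fun g i => ∏ s, if (p' s).1 = i then g s else 1 with hd1def
    set d2 : (Fin (r + 1) → Fˣ) → Fin n → Fˣ := fun _ => 1 with hd2def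
    have hd1val : ∀ (g : Fin (r + 1) → Fˣ) (s : Fin (r + 1)), d1 g (p' s).1 = g s := by
      intro g s
      rw [hd1def]
      refine Finset.prod_eq_single_of_mem s (Finset.mem_univ s) ?_ |>.trans (if_pos rfl)
      intro t _ hts
      exact if_neg (fun hh => hts (hp'r hh))
    have hd1mul : ∀ g h, d1 (g * h) = d1 g * d1 h := by
      intro g h
      funext i
      rw [Pi.mul_apply, hd1def]
      simp only []
      rw [← Finset.prod_mul_distrib]
      refine Finset.prod_congr rfl fun s _ => ?_
      by_cases hsi : (p' s).1 = i <;> simp [hsi]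
    have hd2mul : ∀ g h, d2 (g * h) = d2 g * d2 h := by
      intro g h
      rw [hd2def]
      simp
    have hfree : ∀ g : Fin (r + 1) → Fˣ,
        (∀ p ∈ P, (d1 g p.1 : F) * (d2 g p.2 : F) = 1) → g = 1 := by
      intro g hg
      funext s
      have h1 := hg (p' s) (hp'P s)
      rw [hd1val] at h1
      rw [hd2def] at h1
      simp only [Pi.one_apply, Units.val_one, mul_one] at h1
      exact Units.val_eq_one.mp h1
    have hdvd := dvd_card_scale Q hQ P (Fin (r + 1) → Fˣ) d1 d2 hd1mul hd2mul hfree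
    have hcardG : Nat.card (Fin (r + 1) → Fˣ) = (q - 1) ^ (r + 1) := by
      rw [Nat.card_fun, Nat.card_units, Nat.card_eq_fintype_card (α := F), hq,
        Nat.card_eq_fintype_card (α := Fin (r + 1)), Fintype.card_fin]
    rwa [hcardG] at hdvd

lemma card_split {α : Type*} [Fintype α] (p q : α → Prop) :
    Nat.card {x // p x} = Nat.card {x // p x ∧ q x} + Nat.card {x // p x ∧ ¬ q x} := by
  classical
  rw [Nat.card_eq_fintype_card, Nat.card_eq_fintype_card, Nat.card_eq_fintype_card,
    Fintype.card_subtype, Fintype.card_subtype, Fintype.card_subtype,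
    ← Finset.filter_filter, ← Finset.filter_filter]
  exact (Finset.card_filter_add_card_filter_not (p := q)).symm


end Helpers

theorem stmt18 (F : Type) [Field F] [Fintype F] (q : ℕ) (hq : Fintype.card F = q)
    (m n r : ℕ) (hm : 1 ≤ m) (hn : 1 ≤ n) (S : Set (Fin m × Fin n)) :
    Nat.card {A : Matrix (Fin m) (Fin n) F //
        A.rank = r ∧ ∀ p ∈ S, A p.1 p.2 = 0} ≡
      Nat.card {A : Matrix (Fin m) (Fin n) ℕ //
        (∀ i j, A i j = 0 ∨ A i j = 1) ∧
        Nat.card {p : Fin m × Fin n // A p.1 p.2 = 1} = r ∧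
        (∀ i j j', A i j = 1 → A i j' = 1 → j = j') ∧
        (∀ i i' j, A i j = 1 → A i' j = 1 → i = i') ∧
        (∀ p ∈ S, A p.1 p.2 = 0)} * (q - 1) ^ r [MOD (q - 1) ^ (r + 1)] := by
  classical
  have hsplit := card_split (α := Matrix (Fin m) (Fin n) F)
    (fun A => A.rank = r ∧ ∀ p ∈ S, A p.1 p.2 = 0) (fun A => PPM r S A)
  have h1 : Nat.card {A : Matrix (Fin m) (Fin n) F //
      (A.rank = r ∧ ∀ p ∈ S, A p.1 p.2 = 0) ∧ PPM r S A} =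
      Nat.card {A : Matrix (Fin m) (Fin n) ℕ //
        (∀ i j, A i j = 0 ∨ A i j = 1) ∧
        Nat.card {p : Fin m × Fin n // A p.1 p.2 = 1} = r ∧
        (∀ i j j', A i j = 1 → A i j' = 1 → j = j') ∧
        (∀ i i' j, A i j = 1 → A i' j = 1 → i = i') ∧
        (∀ p ∈ S, A p.1 p.2 = 0)} * (q - 1) ^ r := by
    have hcongr : Nat.card {A : Matrix (Fin m) (Fin n) F //
        (A.rank = r ∧ ∀ p ∈ S, A p.1 p.2 = 0) ∧ PPM r S A} =
        Nat.card {A : Matrix (Fin m) (Fin n) F // PPM r S A} := by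
      apply Nat.card_congr
      apply Equiv.subtypeEquivRight
      intro A
      constructor
      · exact fun h => h.2
      · intro h
        refine ⟨⟨?_, h.1⟩, h⟩
        rw [rank_of_matching A h.2.1 h.2.2.1, h.2.2.2]
    rw [hcongr]
    exact ppm_card S q hq
  have h2 : (q - 1) ^ (r + 1) ∣ Nat.card {A : Matrix (Fin m) (Fin n) F //
      (A.rank = r ∧ ∀ p ∈ S, A p.1 p.2 = 0) ∧ ¬ PPM r S A} := by
    set Q : Matrix (Fin m) (Fin n) F → Prop :=
      fun A => (A.rank = r ∧ ∀ p ∈ S, A p.1 p.2 = 0) ∧ ¬ PPM r S A with hQdef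
    haveI : Fintype {A : Matrix (Fin m) (Fin n) F // Q A} := Fintype.ofFinite _
    set suppF : {A : Matrix (Fin m) (Fin n) F // Q A} → Finset (Fin m × Fin n) :=
      fun x => Finset.univ.filter (fun p : Fin m × Fin n => x.1 p.1 p.2 ≠ 0) with hsF
    have hsig : Nat.card {A : Matrix (Fin m) (Fin n) F // Q A} =
        ∑ P : Finset (Fin m × Fin n), Nat.card {x : {A : Matrix (Fin m) (Fin n) F // Q A} //
          suppF x = P} := by
      rw [← mycard_sigma]
      exact Nat.card_congr (Equiv.sigmaFiberEquiv suppF).symm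
    rw [hsig]
    apply Finset.dvd_sum
    intro P _
    have hfib : Nat.card {x : {A : Matrix (Fin m) (Fin n) F // Q A} // suppF x = P} =
        Nat.card {A : Matrix (Fin m) (Fin n) F //
          Q A ∧ ∀ p : Fin m × Fin n, A p.1 p.2 ≠ 0 ↔ p ∈ P} := by
      apply Nat.card_congr
      refine Equiv.mk (fun x => ⟨x.1.1, x.1.2, fun p => ?_⟩)
        (fun y => ⟨⟨y.1, y.2.1⟩, ?_⟩) (fun x => ?_) (fun y => ?_)
      · have hx : (p ∈ suppF x) = (p ∈ P) := congrArg (fun s => p ∈ s) x.2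
        rw [← hx]
        simp [hsF, Finset.mem_filter]
      · apply Finset.ext
        intro p
        simp [hsF, Finset.mem_filter, y.2.2 p]
      · exact Subtype.ext (Subtype.ext rfl)
      · exact Subtype.ext rfl
    rw [hfib]
    exact fiber_dvd S q hq P
  rw [hsplit, h1]
  obtain ⟨k, hk⟩ := h2
  rw [hk]
  show (_ + (q - 1) ^ (r + 1) * k) % _ = _ % _
  exact Nat.add_mul_mod_self_left _ _ _
end

section
/- Let q be odd and let n, s be integers with 0 ≤ 2s ≤ n. Let I(n,s) be the number of n×n symmetric matrices with entries in {0,1}, with all diagonal entries 0, having exactly 2s entries equal to 1, no two of which lie in the same row or column. Then the number of n×n symmetric matrices over F_q of rank 2s with all diagonal entries zero satisfies sym_0(n, 2s) ≡ I(n,s)·(q−1)^s (mod (q−1)^{s+1}). -/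
open Matrix Finset
attribute [local instance] Classical.propDecidable
set_option linter.unusedSectionVars false
set_option maxHeartbeats 1000000
/-- A free action of a finite group on a finite set: the group order divides the card. -/
lemma free_action_dvd {X : Type*} [DecidableEq X] {G : Type*} [Group G] [Fintype G]
    (f : G → X → X) (hid : ∀ x, f 1 x = x) (hcomp : ∀ g h x, f (g * h) x = f g (f h x))
    (S : Finset X) (hinv : ∀ g x, x ∈ S → f g x ∈ S)
    (hfree : ∀ g x, x ∈ S → f g x = x → g = 1) :
    Fintype.card G ∣ S.card := by
  suffices H : ∀ N (S : Finset X), (∀ g x, x ∈ S → f g x ∈ S) →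
      (∀ g x, x ∈ S → f g x = x → g = 1) → S.card = N → Fintype.card G ∣ S.card from
    H S.card S hinv hfree rfl
  intro N
  induction N using Nat.strong_induction_on with
  | _ N ih =>
  intro S hinv hfree hN
  rcases S.eq_empty_or_nonempty with rfl | ⟨a, ha⟩
  · simp
  · set O : Finset X := Finset.image (fun g => f g a) Finset.univ with hO
    have haO : a ∈ O := by
      refine Finset.mem_image.2 ⟨1, Finset.mem_univ _, hid a⟩
    have hOS : O ⊆ S := by
      intro x hx
      rcases Finset.mem_image.1 hx with ⟨g, _, rfl⟩
      exact hinv g a ha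
    have hcardO : O.card = Fintype.card G := by
      rw [hO, Finset.card_image_of_injective _ ?_, Finset.card_univ]
      intro g h hgh
      simp only at hgh
      have h1 : f (h⁻¹ * g) a = a := by
        rw [hcomp, hgh, ← hcomp, inv_mul_cancel, hid]
      have := hfree _ _ ha h1
      have : h * (h⁻¹ * g) = h * 1 := by rw [this]
      simpa [mul_assoc] using this
    have hsub : (S \ O).card < S.card := by
      apply Finset.card_lt_card
      constructor
      · exact Finset.sdiff_subset
      · intro hsub'
        have := hsub' (hOS haO)
        simp [haO] at this
    have hinv' : ∀ g x, x ∈ S \ O → f g x ∈ S \ O := by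
      intro g x hx
      rcases Finset.mem_sdiff.1 hx with ⟨hxS, hxO⟩
      refine Finset.mem_sdiff.2 ⟨hinv g x hxS, ?_⟩
      intro hmem
      rcases Finset.mem_image.1 hmem with ⟨h, _, hh⟩
      apply hxO
      refine Finset.mem_image.2 ⟨g⁻¹ * h, Finset.mem_univ _, ?_⟩
      rw [hcomp, hh, ← hcomp, inv_mul_cancel, hid]
    have hdvd := ih (S \ O).card (hN ▸ hsub) (S \ O) hinv'
      (fun g x hx => hfree g x (Finset.mem_sdiff.1 hx).1) rfl
    have hle := Finset.card_le_card hOS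
    have : S.card = (S \ O).card + O.card := by
      rw [Finset.card_sdiff_of_subset hOS]
      omega
    rw [this, hcardO]
    exact Nat.dvd_add hdvd dvd_rfl


variable {F : Type} [Field F] [Fintype F]

lemma rank_le_card_cols {n : ℕ} (A : Matrix (Fin n) (Fin n) F) (T : Finset (Fin n))
    (h : ∀ j, j ∉ T → ∀ i, A i j = 0) : A.rank ≤ T.card := by
  classical
  have hfact : A = (A.submatrix id (fun t : ↥T => (t : Fin n))) *
      (Matrix.of fun (t : ↥T) (j : Fin n) => if (t : Fin n) = j then (1 : F) else 0) := by
    ext i j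
    simp only [Matrix.mul_apply, Matrix.of_apply, Matrix.submatrix_apply, id]
    by_cases hj : j ∈ T
    · rw [Finset.sum_eq_single (⟨j, hj⟩ : ↥T)]
      · simp
      · intro b _ hb
        have : (b : Fin n) ≠ j := fun hc => hb (Subtype.ext hc)
        simp [this]
      · simp
    · rw [h j hj i]
      symm
      apply Finset.sum_eq_zero
      intro b _
      have : (b : Fin n) ≠ j := fun hc => hj (hc ▸ b.2)
      simp [this, h j hj]
  have h1 := Matrix.rank_mul_le_left (A.submatrix id (fun t : ↥T => (t : Fin n)))
      (Matrix.of fun (t : ↥T) (j : Fin n) => if (t : Fin n) = j then (1 : F) else 0)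
  rw [← hfact] at h1
  refine h1.trans ?_
  calc (A.submatrix id (fun t : ↥T => (t : Fin n))).rank
      ≤ Fintype.card ↥T := Matrix.rank_le_card_width _
    _ = T.card := Fintype.card_coe T

lemma rank_submatrix_le'' {n : ℕ} {ι κ : Type*} [Fintype ι] [Fintype κ]
    (A : Matrix (Fin n) (Fin n) F) (r : ι → Fin n) (c : κ → Fin n) :
    (A.submatrix r c).rank ≤ A.rank := by
  classical
  have hfact : A.submatrix r c =
      (Matrix.of fun (i : ι) (j : Fin n) => if j = r i then (1 : F) else 0) * A *
        (Matrix.of fun (j : Fin n) (k : κ) => if j = c k then (1 : F) else 0) := by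
    ext i k
    simp only [Matrix.mul_apply, Matrix.of_apply, Matrix.submatrix_apply]
    rw [Finset.sum_eq_single (c k)]
    · simp only [if_pos rfl, mul_one]
      rw [Finset.sum_eq_single (r i)]
      · simp
      · intro b _ hb; simp [hb]
      · simp
    · intro b _ hb
      simp [hb]
    · simp
  calc (A.submatrix r c).rank ≤ (((Matrix.of fun (i : ι) (j : Fin n) =>
        if j = r i then (1 : F) else 0) * A)).rank := by
        rw [hfact]; exact Matrix.rank_mul_le_left _ _
    _ ≤ A.rank := Matrix.rank_mul_le_right _ _

lemma two_mul_card_le_rank {n : ℕ} {ι : Type} [Fintype ι] [DecidableEq ι]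
    (A : Matrix (Fin n) (Fin n) F) (r nb : ι → Fin n)
    (hd : ∀ i, A i i = 0) (hsymm : A.IsSymm)
    (hne : ∀ p, A (r p) (nb p) ≠ 0)
    (hcross : ∀ p q : ι, p ≠ q → ∀ x y, (x = r p ∨ x = nb p) → (y = r q ∨ y = nb q) →
      A x y = 0) :
    2 * Fintype.card ι ≤ A.rank := by
  classical
  set h : Fin 2 × ι → Fin n := fun kp => if kp.1 = 0 then r kp.2 else nb kp.2 with hh
  have hM : A.submatrix h h = Matrix.blockDiagonal
      (fun p : ι => !![0, A (r p) (nb p); A (r p) (nb p), 0]) := by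
    ext ⟨k, p⟩ ⟨k', p'⟩
    simp only [Matrix.submatrix_apply, Matrix.blockDiagonal_apply, hh]
    by_cases hpq : p = p'
    · subst hpq
      simp only [if_pos rfl]
      fin_cases k <;> fin_cases k' <;>
        simp [Matrix.cons_val_zero, Matrix.cons_val_one, hd, hsymm.apply]
    · rw [if_neg hpq]
      apply hcross p p' hpq
      · split_ifs <;> simp
      · split_ifs <;> simp
  have hdet : (A.submatrix h h).det ≠ 0 := by
    rw [hM, Matrix.det_blockDiagonal]
    apply Finset.prod_ne_zero_iff.2
    intro p _
    rw [Matrix.det_fin_two_of]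
    simpa using fun hc => hne p hc
  have hrank : (A.submatrix h h).rank = Fintype.card (Fin 2 × ι) :=
    Matrix.rank_of_isUnit _ ((Matrix.isUnit_iff_isUnit_det _).2 (isUnit_iff_ne_zero.2 hdet))
  calc 2 * Fintype.card ι = Fintype.card (Fin 2 × ι) := by simp [Fintype.card_prod]
    _ = (A.submatrix h h).rank := hrank.symm
    _ ≤ A.rank := rank_submatrix_le'' A h h

section Reach
variable {n : ℕ}

/-- Reachability in the support graph of a square matrix. -/
def mreach (S : Matrix (Fin n) (Fin n) F) : Fin n → Fin n → Prop :=
  Relation.ReflTransGen (fun i j => S i j ≠ 0)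

lemma mreach_symm {S : Matrix (Fin n) (Fin n) F} (hS : S.IsSymm) {i j : Fin n}
    (h : mreach S i j) : mreach S j i := by
  have hsym : Symmetric (fun i j : Fin n => S i j ≠ 0) := by
    intro a b hab hc
    exact hab (by rw [← hS.apply]; exact hc)
  haveI : Std.Symm (fun i j : Fin n => S i j ≠ 0) := ⟨hsym⟩
  exact Std.Symm.symm (r := Relation.ReflTransGen (fun i j : Fin n => S i j ≠ 0)) _ _ h

lemma mreach_trans {S : Matrix (Fin n) (Fin n) F} {i j k : Fin n}
    (h : mreach S i j) (h' : mreach S j k) : mreach S i k := h.trans h'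

/-- The minimal element of the connected component. -/
noncomputable def mrep (S : Matrix (Fin n) (Fin n) F) (i : Fin n) : Fin n :=
  if hn : (univ.filter (fun j => mreach S i j)).Nonempty
  then (univ.filter (fun j => mreach S i j)).min' hn else i

lemma mrep_spec (S : Matrix (Fin n) (Fin n) F) (i : Fin n) :
    mrep S i = (univ.filter (fun j => mreach S i j)).min'
      ⟨i, Finset.mem_filter.2 ⟨Finset.mem_univ _, Relation.ReflTransGen.refl⟩⟩ := by
  rw [mrep, dif_pos ⟨i, Finset.mem_filter.2 ⟨Finset.mem_univ _, Relation.ReflTransGen.refl⟩⟩]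

lemma mreach_mrep (S : Matrix (Fin n) (Fin n) F) (i : Fin n) : mreach S i (mrep S i) := by
  rw [mrep_spec]
  have := Finset.min'_mem (univ.filter (fun j => mreach S i j))
    ⟨i, Finset.mem_filter.2 ⟨Finset.mem_univ _, Relation.ReflTransGen.refl⟩⟩
  simpa using this

lemma mrep_eq_of_mreach {S : Matrix (Fin n) (Fin n) F} (hS : S.IsSymm) {i j : Fin n}
    (h : mreach S i j) : mrep S i = mrep S j := by
  rw [mrep_spec, mrep_spec]
  congr 1
  ext k
  simp only [Finset.mem_filter, Finset.mem_univ, true_and]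
  constructor
  · intro hk; exact mreach_trans (mreach_symm hS h) hk
  · intro hk; exact mreach_trans h hk

lemma mrep_idem {S : Matrix (Fin n) (Fin n) F} (hS : S.IsSymm) (i : Fin n) :
    mrep S (mrep S i) = mrep S i :=
  (mrep_eq_of_mreach hS (mreach_mrep S i)).symm

/-- A vertex distinct from `i` but reachable from `i` has a neighbor. -/
lemma mreach_nonisolated' {S : Matrix (Fin n) (Fin n) F} (hS : S.IsSymm) {i j : Fin n}
    (h : mreach S i j) : j = i ∨ ∃ k, S j k ≠ 0 := by
  induction h with
  | refl => exact Or.inl rfl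
  | @tail b c _ hbc _ =>
    refine Or.inr ⟨b, ?_⟩
    rw [show S c b = S b c from by rw [← hS.apply]]
    exact hbc

lemma mreach_nonisolated {S : Matrix (Fin n) (Fin n) F} (hS : S.IsSymm) {i j : Fin n}
    (h : mreach S i j) (hne : j ≠ i) : ∃ k, S j k ≠ 0 :=
  (mreach_nonisolated' hS h).resolve_left hne

lemma mreach_propagate {S : Matrix (Fin n) (Fin n) F} {d : Fin n → F}
    (hedge : ∀ a b, S a b ≠ 0 → d a * d b = 1) {r x : Fin n}
    (hr : d r = 1) (h : mreach S r x) : d x = 1 := by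
  induction h with
  | refl => exact hr
  | @tail b c _ hbc ih =>
    have := hedge b c hbc
    rw [ih] at this
    simpa using this

end Reach

section Supp
variable {n : ℕ}

noncomputable def suppM (A : Matrix (Fin n) (Fin n) F) : Matrix (Fin n) (Fin n) F :=
  Matrix.of fun i j => if A i j = 0 then 0 else 1

lemma suppM_eq_zero_iff {A : Matrix (Fin n) (Fin n) F} {i j : Fin n} :
    suppM A i j = 0 ↔ A i j = 0 := by
  simp only [suppM, Matrix.of_apply]
  split_ifs with h <;> simp [h]

lemma suppM_eq_one_iff {A : Matrix (Fin n) (Fin n) F} {i j : Fin n} :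
    suppM A i j = 1 ↔ A i j ≠ 0 := by
  simp only [suppM, Matrix.of_apply]
  split_ifs with h <;> simp [h]

lemma suppM_zero_or_one (A : Matrix (Fin n) (Fin n) F) (i j : Fin n) :
    suppM A i j = 0 ∨ suppM A i j = 1 := by
  simp only [suppM, Matrix.of_apply]
  split_ifs <;> simp

lemma suppM_isSymm {A : Matrix (Fin n) (Fin n) F} (hA : A.IsSymm) : (suppM A).IsSymm := by
  ext i j
  simp only [Matrix.transpose_apply, suppM, Matrix.of_apply, hA.apply]

/-- `S` is the pattern of a partial matching of size `s` (as a 0/1 matrix over `F`). -/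
def IsMatch (s : ℕ) (S : Matrix (Fin n) (Fin n) F) : Prop :=
  S.IsSymm ∧ (∀ i j, S i j = 0 ∨ S i j = 1) ∧ (∀ i, S i i = 0) ∧
  Nat.card {p : Fin n × Fin n // S p.1 p.2 = 1} = 2 * s ∧
  (∀ i j j', S i j = 1 → S i j' = 1 → j = j') ∧
  (∀ i i' j, S i j = 1 → S i' j = 1 → i = i')

lemma isMatch_card_pairs {s : ℕ} {S : Matrix (Fin n) (Fin n) F}
    (h : Nat.card {p : Fin n × Fin n // S p.1 p.2 = 1} = 2 * s) :
    (univ.filter (fun p : Fin n × Fin n => S p.1 p.2 = 1)).card = 2 * s := by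
  rw [← h, Nat.card_eq_fintype_card, Fintype.card_subtype]

/-- In a size-`s` matching pattern, the set of non-isolated vertices has `2*s` elements. -/
lemma isMatch_card_V {s : ℕ} {S : Matrix (Fin n) (Fin n) F} (hm : IsMatch s S) :
    (univ.filter (fun i => ∃ j, S i j = 1)).card = 2 * s := by
  obtain ⟨hsym, h01, hdiag, hcount, hrow, hcol⟩ := hm
  rw [← isMatch_card_pairs hcount]
  symm
  apply Finset.card_bij (fun p _ => p.1)
  · intro p hp
    simp only [Finset.mem_filter, Finset.mem_univ, true_and] at hp ⊢
    exact ⟨p.2, hp⟩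
  · intro p hp q hq hpq
    simp only [Finset.mem_filter, Finset.mem_univ, true_and] at hp hq
    have := hrow p.1 p.2 q.2 hp (by rw [← hpq] at hq; exact hq)
    exact Prod.ext hpq this
  · intro b hb
    simp only [Finset.mem_filter, Finset.mem_univ, true_and] at hb
    obtain ⟨j, hj⟩ := hb
    exact ⟨(b, j), by simp [hj], rfl⟩

/-- The set of "upper edges" of a matching pattern has `s` elements. -/
lemma isMatch_card_U {s : ℕ} {S : Matrix (Fin n) (Fin n) F} (hm : IsMatch s S) :
    (univ.filter (fun p : Fin n × Fin n => p.1 < p.2 ∧ S p.1 p.2 = 1)).card = s := by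
  obtain ⟨hsym, h01, hdiag, hcount, hrow, hcol⟩ := hm
  have hE := isMatch_card_pairs hcount
  set E := univ.filter (fun p : Fin n × Fin n => S p.1 p.2 = 1) with hEdef
  have hsplit : (E.filter (fun p => p.1 < p.2)).card +
      (E.filter (fun p => ¬ p.1 < p.2)).card = E.card :=
    Finset.card_filter_add_card_filter_not _
  have hU : E.filter (fun p => p.1 < p.2) =
      univ.filter (fun p : Fin n × Fin n => p.1 < p.2 ∧ S p.1 p.2 = 1) := by
    ext p; simp [hEdef, and_comm]
  have hLU : (E.filter (fun p => ¬ p.1 < p.2)).card =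
      (E.filter (fun p => p.1 < p.2)).card := by
    apply Finset.card_bij (fun p _ => Prod.swap p)
    · intro p hp
      simp only [hEdef, Finset.mem_filter, Finset.mem_univ, true_and] at hp ⊢
      obtain ⟨hS, hlt⟩ := hp
      have hne : p.1 ≠ p.2 := by
        intro hc
        rw [hc] at hS
        exact absurd hS (by simp [hdiag p.2])
      have : p.2 < p.1 := by
        rcases lt_trichotomy p.1 p.2 with h | h | h
        · exact absurd h hlt
        · exact absurd h hne
        · exact h
      refine ⟨?_, this⟩
      show S p.2 p.1 = 1
      rw [show S p.2 p.1 = S p.1 p.2 from hsym.apply p.1 p.2]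
      exact hS
    · intro p _ q _ h
      exact Prod.swap_injective h
    · intro b hb
      simp only [hEdef, Finset.mem_filter, Finset.mem_univ, true_and] at hb
      obtain ⟨hS, hlt⟩ := hb
      refine ⟨Prod.swap b, ?_, by simp⟩
      simp only [hEdef, Finset.mem_filter, Finset.mem_univ, true_and, Prod.fst_swap,
        Prod.snd_swap]
      refine ⟨?_, by omega⟩
      show S b.2 b.1 = 1
      rw [show S b.2 b.1 = S b.1 b.2 from hsym.apply b.1 b.2]; exact hS
  rw [← hU]
  omega

end Supp

section MatchRank
variable {n : ℕ}

lemma match_diag {s : ℕ} {S A : Matrix (Fin n) (Fin n) F} (hm : IsMatch s S)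
    (hsupp : suppM A = S) : ∀ i, A i i = 0 := by
  intro i
  have := hm.2.2.1 i
  rw [← hsupp] at this
  exact suppM_eq_zero_iff.1 this

lemma match_rank {s : ℕ} {S A : Matrix (Fin n) (Fin n) F} (hm : IsMatch s S)
    (hA : A.IsSymm) (hsupp : suppM A = S) : A.rank = 2 * s := by
  classical
  obtain ⟨hsym, h01, hdiag, hcount, hrow, hcol⟩ := hm
  have hSone : ∀ i j, S i j = 1 ↔ A i j ≠ 0 := by
    intro i j; rw [← hsupp]; exact suppM_eq_one_iff
  have hd : ∀ i, A i i = 0 := match_diag ⟨hsym, h01, hdiag, hcount, hrow, hcol⟩ hsupp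
  apply le_antisymm
  · -- upper bound
    have := rank_le_card_cols A (univ.filter (fun i => ∃ j, S i j = 1)) ?_
    · rwa [isMatch_card_V ⟨hsym, h01, hdiag, hcount, hrow, hcol⟩] at this
    · intro j hj i
      by_contra hne
      apply hj
      simp only [Finset.mem_filter, Finset.mem_univ, true_and]
      refine ⟨i, ?_⟩
      rw [show S j i = S i j from hsym.apply i j]
      exact (hSone i j).2 hne
  · -- lower bound
    set U := univ.filter (fun p : Fin n × Fin n => p.1 < p.2 ∧ S p.1 p.2 = 1) with hUdef
    have hcardU : U.card = s := isMatch_card_U ⟨hsym, h01, hdiag, hcount, hrow, hcol⟩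
    have memU : ∀ p : ↥U, (p : Fin n × Fin n).1 < (p : Fin n × Fin n).2 ∧
        S (p : Fin n × Fin n).1 (p : Fin n × Fin n).2 = 1 := by
      intro p
      have := p.2
      simp only [hUdef, Finset.mem_filter, Finset.mem_univ, true_and] at this
      exact this
    have h2 := two_mul_card_le_rank A (fun p : ↥U => (p : Fin n × Fin n).1)
      (fun p : ↥U => (p : Fin n × Fin n).2) hd hA ?_ ?_
    · rwa [Fintype.card_coe, hcardU] at h2
    · intro p
      exact (hSone _ _).1 (memU p).2
    · intro p q hpq x y hx hy
      by_contra hne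
      have hSxy : S x y = 1 := (hSone x y).2 hne
      obtain ⟨hplt, hpS⟩ := memU p
      obtain ⟨hqlt, hqS⟩ := memU q
      set p1 := (p : Fin n × Fin n).1
      set p2 := (p : Fin n × Fin n).2
      set q1 := (q : Fin n × Fin n).1
      set q2 := (q : Fin n × Fin n).2
      have hpair : (x = p1 ∧ y = p2) ∨ (x = p2 ∧ y = p1) := by
        rcases hx with rfl | rfl
        · exact Or.inl ⟨rfl, hrow _ _ _ hSxy hpS⟩
        · refine Or.inr ⟨rfl, ?_⟩
          have hS' : S p2 p1 = 1 := by
            rw [show S p2 p1 = S p1 p2 from hsym.apply p1 p2]; exact hpS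
          exact hrow _ _ _ hSxy hS'
      have hqair : (y = q1 ∧ x = q2) ∨ (y = q2 ∧ x = q1) := by
        rcases hy with rfl | rfl
        · refine Or.inl ⟨rfl, ?_⟩
          have hS' : S q2 q1 = 1 := by
            rw [show S q2 q1 = S q1 q2 from hsym.apply q1 q2]; exact hqS
          exact hcol _ _ _ hSxy hS'
        · exact Or.inr ⟨rfl, hcol _ _ _ hSxy hqS⟩
      have hpqne : ¬ ((p : Fin n × Fin n) = (q : Fin n × Fin n)) := by
        intro hc; exact hpq (Subtype.ext hc)
      rcases hpair with ⟨hx1, hy1⟩ | ⟨hx1, hy1⟩ <;> rcases hqair with ⟨hy2, hx2⟩ | ⟨hy2, hx2⟩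
      · -- x = p1, y = p2, y = q1, x = q2 : p1 = q2, p2 = q1
        have e1 : p1 = q2 := hx1.symm.trans hx2
        have e2 : p2 = q1 := hy1.symm.trans hy2
        rw [e1] at hplt; rw [e2] at hplt
        exact absurd (hplt.trans hqlt) (lt_irrefl _)
      · -- p = q
        exact hpqne (Prod.ext (hx1.symm.trans hx2) (hy1.symm.trans hy2))
      · -- x = p2 = q2, y = p1 = q1 : p = q
        exact hpqne (Prod.ext (hy1.symm.trans hy2) (hx1.symm.trans hx2))
      · -- x = p2 = q1, y = p1 = q2
        have e1 : p2 = q1 := hx1.symm.trans hx2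
        have e2 : p1 = q2 := hy1.symm.trans hy2
        rw [← e1] at hqlt; rw [← e2] at hqlt
        exact absurd (hplt.trans hqlt) (lt_irrefl _)

end MatchRank

section MatchCount
variable {n : ℕ}

lemma match_count {s : ℕ} {S : Matrix (Fin n) (Fin n) F} (hm : IsMatch s S) :
    (univ.filter (fun A : Matrix (Fin n) (Fin n) F => A.IsSymm ∧ suppM A = S)).card
      = (Fintype.card F - 1) ^ s := by
  classical
  obtain ⟨hsym, h01, hdiag, hcount, hrow, hcol⟩ := hm
  set U := univ.filter (fun p : Fin n × Fin n => p.1 < p.2 ∧ S p.1 p.2 = 1) with hUdef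
  have hcardU : U.card = s := isMatch_card_U ⟨hsym, h01, hdiag, hcount, hrow, hcol⟩
  have memU : ∀ {p : Fin n × Fin n}, p ∈ U ↔ p.1 < p.2 ∧ S p.1 p.2 = 1 := by
    intro p; simp [hUdef]
  -- the inverse map
  set bld : (↥U → {x : F // x ≠ 0}) → Matrix (Fin n) (Fin n) F :=
    fun f => Matrix.of fun i j =>
      if h : (i, j) ∈ U then (f ⟨(i, j), h⟩ : F)
      else if h' : (j, i) ∈ U then (f ⟨(j, i), h'⟩ : F) else 0 with hbld
  have hnotboth : ∀ {i j : Fin n}, (i, j) ∈ U → (j, i) ∈ U → False := by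
    intro i j h1 h2
    have a1 := (memU.1 h1).1
    have a2 := (memU.1 h2).1
    exact absurd (a1.trans a2) (lt_irrefl _)
  have hbld_symm : ∀ f, (bld f).IsSymm := by
    intro f
    ext i j
    show bld f j i = bld f i j
    simp only [hbld, Matrix.of_apply]
    by_cases h1 : (i, j) ∈ U
    · rw [dif_neg (fun h2 => hnotboth h1 h2), dif_pos h1, dif_pos h1]
    · by_cases h2 : (j, i) ∈ U
      · rw [dif_pos h2, dif_neg h1, dif_pos h2]
      · rw [dif_neg h2, dif_neg h1, dif_neg h1, dif_neg h2]
  have hScase : ∀ i j : Fin n, S i j = 1 → (i, j) ∈ U ∨ (j, i) ∈ U := by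
    intro i j hS
    rcases lt_trichotomy i j with h | h | h
    · exact Or.inl (memU.2 ⟨h, hS⟩)
    · exfalso; rw [h] at hS; exact absurd hS (by simp [hdiag j])
    · refine Or.inr (memU.2 ⟨h, ?_⟩)
      rw [show S j i = S i j from hsym.apply i j]; exact hS
  have hbld_supp : ∀ f, suppM (bld f) = S := by
    intro f
    ext i j
    by_cases h1 : (i, j) ∈ U
    · have : bld f i j ≠ 0 := by
        simp only [hbld, Matrix.of_apply, dif_pos h1]
        exact (f ⟨(i, j), h1⟩).2
      rw [show suppM (bld f) i j = 1 from suppM_eq_one_iff.2 this]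
      exact ((memU.1 h1).2).symm
    · by_cases h2 : (j, i) ∈ U
      · have : bld f i j ≠ 0 := by
          simp only [hbld, Matrix.of_apply, dif_neg h1, dif_pos h2]
          exact (f ⟨(j, i), h2⟩).2
        rw [show suppM (bld f) i j = 1 from suppM_eq_one_iff.2 this]
        have := (memU.1 h2).2
        rw [show S j i = S i j from hsym.apply i j] at this
        exact this.symm
      · have hz : bld f i j = 0 := by
          simp only [hbld, Matrix.of_apply, dif_neg h1, dif_neg h2]
        rw [show suppM (bld f) i j = 0 from suppM_eq_zero_iff.2 hz]
        rcases h01 i j with h | h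
        · exact h.symm
        · exact absurd (hScase i j h) (by simp [h1, h2])
  have e : {A : Matrix (Fin n) (Fin n) F // A.IsSymm ∧ suppM A = S} ≃
      (↥U → {x : F // x ≠ 0}) := by
    refine ⟨fun A p => ⟨A.1 (p : Fin n × Fin n).1 (p : Fin n × Fin n).2, ?_⟩,
      fun f => ⟨bld f, hbld_symm f, hbld_supp f⟩, ?_, ?_⟩
    · have hS1 := (memU.1 p.2).2
      rw [← A.2.2] at hS1
      exact suppM_eq_one_iff.1 hS1
    · rintro ⟨A, hA, hsupp⟩
      apply Subtype.ext
      dsimp only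
      ext i j
      simp only [hbld, Matrix.of_apply]
      by_cases h1 : (i, j) ∈ U
      · rw [dif_pos h1]
      · rw [dif_neg h1]
        by_cases h2 : (j, i) ∈ U
        · rw [dif_pos h2]
          exact hA.apply i j
        · rw [dif_neg h2]
          by_contra hne
          have : A i j ≠ 0 := fun hc => hne (by rw [hc])
          have hS1 : S i j = 1 := by rw [← hsupp]; exact suppM_eq_one_iff.2 this
          rcases hScase i j hS1 with h | h
          · exact h1 h
          · exact h2 h
    · intro f
      funext p
      apply Subtype.ext
      dsimp only
      have hmem : ((p : Fin n × Fin n).1, (p : Fin n × Fin n).2) ∈ U := by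
        rw [Prod.mk.eta]; exact p.2
      simp only [hbld, Matrix.of_apply, dif_pos hmem]
  have hc1 : (univ.filter (fun A : Matrix (Fin n) (Fin n) F =>
      A.IsSymm ∧ suppM A = S)).card
      = Fintype.card {A : Matrix (Fin n) (Fin n) F // A.IsSymm ∧ suppM A = S} := by
    rw [Fintype.card_subtype]
  rw [hc1, Fintype.card_congr e, Fintype.card_fun]
  congr 1
  · rw [Fintype.card_subtype_compl, Fintype.card_subtype_eq]
  · rw [Fintype.card_coe, hcardU]

end MatchCount

section NonMatch
variable {n : ℕ}

/-- If the support pattern is tight (2s non-isolated vertices, s components) then it is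
a perfect matching pattern of size s. -/
lemma tight_isMatch {s : ℕ} {S : Matrix (Fin n) (Fin n) F}
    (hSsym : S.IsSymm) (hS01 : ∀ i j, S i j = 0 ∨ S i j = 1) (hSdiag : ∀ i, S i i = 0)
    (hV : (univ.filter (fun i => ∃ j, S i j ≠ 0)).card = 2 * s)
    (hF : ((univ.filter (fun i => ∃ j, S i j ≠ 0)).filter (fun i => mrep S i = i)).card = s) :
    IsMatch s S := by
  classical
  set V := univ.filter (fun i : Fin n => ∃ j, S i j ≠ 0) with hVdef
  set Fx := V.filter (fun i => mrep S i = i) with hFdef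
  have memV : ∀ {i : Fin n}, i ∈ V ↔ ∃ j, S i j ≠ 0 := by
    intro i; simp [hVdef]
  have hVmem_of_edge : ∀ {i j : Fin n}, S i j ≠ 0 → i ∈ V ∧ j ∈ V := by
    intro i j hij
    refine ⟨memV.2 ⟨j, hij⟩, memV.2 ⟨i, ?_⟩⟩
    rw [show S j i = S i j from hSsym.apply i j]; exact hij
  have hrep_mem : ∀ {i : Fin n}, i ∈ V → mrep S i ∈ Fx := by
    intro i hi
    have hidem := mrep_idem hSsym i
    have : mrep S i ∈ V := by
      rcases mreach_nonisolated' hSsym (mreach_mrep S i) with h | h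
      · rwa [h]
      · exact memV.2 h
    simp only [hFdef, Finset.mem_filter]
    exact ⟨this, hidem⟩
  -- row uniqueness
  have hrow : ∀ i j j', S i j = 1 → S i j' = 1 → j = j' := by
    intro i j j' h1 h2
    by_contra hne
    have hij : S i j ≠ 0 := by rw [h1]; exact one_ne_zero
    have hij' : S i j' ≠ 0 := by rw [h2]; exact one_ne_zero
    have hiV : i ∈ V := (hVmem_of_edge hij).1
    have hjV : j ∈ V := (hVmem_of_edge hij).2
    have hj'V : j' ∈ V := (hVmem_of_edge hij').2
    have hsum : V.card = ∑ r ∈ Fx, (V.filter (fun x => mrep S x = r)).card := by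
      apply Finset.card_eq_sum_card_fiberwise
      intro x hx
      exact hrep_mem hx
    set r0 := mrep S i with hr0
    have hr0F : r0 ∈ Fx := hrep_mem hiV
    have hrepj : mrep S j = r0 := by
      rw [hr0]
      exact (mrep_eq_of_mreach hSsym (Relation.ReflTransGen.single hij)).symm
    have hrepj' : mrep S j' = r0 := by
      rw [hr0]
      exact (mrep_eq_of_mreach hSsym (Relation.ReflTransGen.single hij')).symm
    have hijne : i ≠ j := by
      intro hc; rw [hc] at hij; exact hij (hSdiag j)
    have hijne' : i ≠ j' := by
      intro hc; rw [hc] at hij'; exact hij' (hSdiag j')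
    have hfib0 : 3 ≤ (V.filter (fun x => mrep S x = r0)).card := by
      have hsub : ({i, j, j'} : Finset (Fin n)) ⊆ V.filter (fun x => mrep S x = r0) := by
        intro x hx
        simp only [Finset.mem_insert, Finset.mem_singleton] at hx
        rcases hx with rfl | rfl | rfl
        · exact Finset.mem_filter.2 ⟨hiV, rfl⟩
        · exact Finset.mem_filter.2 ⟨hjV, hrepj⟩
        · exact Finset.mem_filter.2 ⟨hj'V, hrepj'⟩
      have : ({i, j, j'} : Finset (Fin n)).card = 3 := by
        rw [Finset.card_insert_of_notMem (by simp [hijne, hijne']),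
          Finset.card_insert_of_notMem (by simp [hne]), Finset.card_singleton]
      rw [← this]
      exact Finset.card_le_card hsub
    have hfib2 : ∀ r ∈ Fx, 2 ≤ (V.filter (fun x => mrep S x = r)).card := by
      intro r hr
      simp only [hFdef, Finset.mem_filter] at hr
      obtain ⟨hrV, hrfix⟩ := hr
      obtain ⟨k, hk⟩ := memV.1 hrV
      have hkV : k ∈ V := (hVmem_of_edge hk).2
      have hkrep : mrep S k = r := by
        have := mrep_eq_of_mreach hSsym (Relation.ReflTransGen.single hk)
        rw [← this, hrfix]
      have hkr : k ≠ r := by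
        intro hc; rw [hc] at hk; exact hk (hSdiag r)
      have hsub : ({r, k} : Finset (Fin n)) ⊆ V.filter (fun x => mrep S x = r) := by
        intro x hx
        simp only [Finset.mem_insert, Finset.mem_singleton] at hx
        rcases hx with rfl | rfl
        · simp only [Finset.mem_filter]; exact ⟨hrV, hrfix⟩
        · simp only [Finset.mem_filter]; exact ⟨hkV, hkrep⟩
      have : ({r, k} : Finset (Fin n)).card = 2 := by
        rw [Finset.card_insert_of_notMem (by simp [Ne.symm hkr]), Finset.card_singleton]
      rw [← this]
      exact Finset.card_le_card hsub
    have hbound : 2 * s + 1 ≤ V.card := by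
      rw [hsum, ← Finset.add_sum_erase _ _ hr0F]
      have h1 : ∑ r ∈ Fx.erase r0, (V.filter (fun x => mrep S x = r)).card ≥
          ∑ _r ∈ Fx.erase r0, 2 := by
        apply Finset.sum_le_sum
        intro r hr
        exact hfib2 r (Finset.mem_of_mem_erase hr)
      have h2 : (Fx.erase r0).card = s - 1 := by
        rw [Finset.card_erase_of_mem hr0F, hF]
      have h3 : 1 ≤ s := by
        by_contra hc
        have : s = 0 := by omega
        rw [this] at hF
        have := Finset.card_eq_zero.1 hF
        rw [this] at hr0F
        exact absurd hr0F (Finset.notMem_empty _)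
      have h4 := Finset.sum_const 2 ▸ h1
      simp only [Finset.sum_const, smul_eq_mul] at h1
      rw [h2] at h1
      omega
    rw [hV] at hbound
    omega
  have hcol : ∀ i i' j, S i j = 1 → S i' j = 1 → i = i' := by
    intro i i' j h1 h2
    apply hrow j i i'
    · rw [show S j i = S i j from hSsym.apply i j]; exact h1
    · rw [show S j i' = S i' j from hSsym.apply i' j]; exact h2
  refine ⟨hSsym, hS01, hSdiag, ?_, hrow, hcol⟩
  -- count of ones
  rw [Nat.card_eq_fintype_card, Fintype.card_subtype, ← hV]
  apply Finset.card_bij (fun p _ => p.1)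
  · intro p hp
    simp only [Finset.mem_filter, Finset.mem_univ, true_and] at hp
    exact memV.2 ⟨p.2, by rw [hp]; exact one_ne_zero⟩
  · intro p hp q hq hpq
    simp only [Finset.mem_filter, Finset.mem_univ, true_and] at hp hq
    exact Prod.ext hpq (hrow p.1 p.2 q.2 hp (by rw [← hpq] at hq; exact hq))
  · intro b hb
    obtain ⟨j, hj⟩ := memV.1 hb
    have : S b j = 1 := (hS01 b j).resolve_left hj
    exact ⟨(b, j), by simp [this], rfl⟩

end NonMatch

section NonMatchDvd
variable {n : ℕ}

lemma nonmatch_dvd {s : ℕ} {S : Matrix (Fin n) (Fin n) F} (hnm : ¬ IsMatch s S) :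
    (Fintype.card F - 1) ^ (s + 1) ∣
      ((univ.filter (fun A : Matrix (Fin n) (Fin n) F =>
        A.IsSymm ∧ A.rank = 2 * s ∧ ∀ i, A i i = 0)).filter (fun A => suppM A = S)).card := by
  classical
  set fib := (univ.filter (fun A : Matrix (Fin n) (Fin n) F =>
      A.IsSymm ∧ A.rank = 2 * s ∧ ∀ i, A i i = 0)).filter (fun A => suppM A = S) with hfib
  have memfib : ∀ {A : Matrix (Fin n) (Fin n) F}, A ∈ fib ↔
      (A.IsSymm ∧ A.rank = 2 * s ∧ (∀ i, A i i = 0)) ∧ suppM A = S := by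
    intro A; simp [hfib, Finset.mem_filter, and_assoc]
  rcases fib.eq_empty_or_nonempty with he | ⟨A₀, hA₀⟩
  · rw [he]; simp
  obtain ⟨⟨hA₀s, hA₀r, hA₀d⟩, hA₀supp⟩ := memfib.1 hA₀
  have hSsym : S.IsSymm := hA₀supp ▸ suppM_isSymm hA₀s
  have hS01 : ∀ i j, S i j = 0 ∨ S i j = 1 := by
    intro i j; rw [← hA₀supp]; exact suppM_zero_or_one A₀ i j
  have hSdiag : ∀ i, S i i = 0 := by
    intro i; rw [← hA₀supp]; exact suppM_eq_zero_iff.2 (hA₀d i)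
  -- every matrix in the fiber has the same support relation
  have hsupp_iff : ∀ {A : Matrix (Fin n) (Fin n) F}, A ∈ fib →
      ∀ i j, (A i j ≠ 0 ↔ S i j ≠ 0) := by
    intro A hA i j
    have hs := (memfib.1 hA).2
    constructor
    · intro h
      rw [← hs]
      rw [show suppM A i j = 1 from suppM_eq_one_iff.2 h]
      exact one_ne_zero
    · intro h hc
      apply h
      rw [← hs]
      exact suppM_eq_zero_iff.2 hc
  set V := univ.filter (fun i : Fin n => ∃ j, S i j ≠ 0) with hVdef
  set Fx := V.filter (fun i => mrep S i = i) with hFdef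
  set I₀ := V.filter (fun i => mrep S i ≠ i) with hI₀def
  have memV : ∀ {i : Fin n}, i ∈ V ↔ ∃ j, S i j ≠ 0 := by
    intro i; simp [hVdef]
  -- upper bound : 2s ≤ |V|
  have hVge : 2 * s ≤ V.card := by
    rw [← hA₀r]
    apply rank_le_card_cols
    intro j hj i
    by_contra hne
    apply hj
    have : S i j ≠ 0 := (hsupp_iff hA₀ i j).1 hne
    refine memV.2 ⟨i, ?_⟩
    rw [show S j i = S i j from hSsym.apply i j]
    exact this
  -- lower bound : 2|Fx| ≤ 2s
  have hFxle : Fx.card ≤ s := by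
    have hFxmem : ∀ (r : ↥Fx), (r : Fin n) ∈ V ∧ mrep S (r : Fin n) = (r : Fin n) := by
      intro r
      have := r.2
      simp only [hFdef, Finset.mem_filter] at this
      exact this
    have hnb : ∀ r : ↥Fx, ∃ j, S (r : Fin n) j ≠ 0 := by
      intro r
      exact memV.1 (hFxmem r).1
    set nb : ↥Fx → Fin n := fun r => Classical.choose (hnb r) with hnbdef
    have hnbS : ∀ r : ↥Fx, S (r : Fin n) (nb r) ≠ 0 := fun r => Classical.choose_spec (hnb r)
    have hrep_all : ∀ (r : ↥Fx) x, (x = (r : Fin n) ∨ x = nb r) → mrep S x = (r : Fin n) := by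
      intro r x hx
      rcases hx with rfl | rfl
      · exact (hFxmem r).2
      · have := mrep_eq_of_mreach hSsym (Relation.ReflTransGen.single (hnbS r))
        rw [← this, (hFxmem r).2]
    have h2 := two_mul_card_le_rank A₀ (fun r : ↥Fx => (r : Fin n)) nb hA₀d hA₀s ?_ ?_
    · rw [hA₀r, Fintype.card_coe] at h2
      omega
    · intro r
      exact (hsupp_iff hA₀ _ _).2 (hnbS r)
    · intro p q hpq x y hx hy
      by_contra hne
      have hSxy : S x y ≠ 0 := (hsupp_iff hA₀ x y).1 hne
      have h1 : mrep S x = (p : Fin n) := hrep_all p x hx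
      have h2 : mrep S y = (q : Fin n) := hrep_all q y hy
      have := mrep_eq_of_mreach hSsym (Relation.ReflTransGen.single hSxy)
      rw [h1, h2] at this
      exact hpq (Subtype.ext this)
  have hVsplit : I₀.card + Fx.card = V.card := by
    rw [hI₀def, hFdef]
    rw [add_comm]
    exact Finset.card_filter_add_card_filter_not _
  by_cases hbig : s + 1 ≤ I₀.card
  swap
  · -- tight case: S is a matching, contradiction
    exfalso
    apply hnm
    have h1 : V.card = 2 * s ∧ Fx.card = s := by omega
    exact tight_isMatch hSsym hS01 hSdiag h1.1 (by rw [← hFdef]; exact h1.2)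
  -- main case: free group action
  obtain ⟨I, hIsub, hIcard⟩ := Finset.exists_subset_card_eq hbig
  set dg : (↥I → Fˣ) → Fin n → F :=
    fun g i => if h : i ∈ I then (g ⟨i, h⟩ : F) else 1 with hdgdef
  have hdg_ne : ∀ g i, dg g i ≠ 0 := by
    intro g i
    simp only [hdgdef]
    split_ifs with h
    · exact Units.ne_zero _
    · exact one_ne_zero
  have hdg_one : ∀ i, dg 1 i = 1 := by
    intro i
    simp only [hdgdef]
    split_ifs with h <;> simp
  have hdg_mul : ∀ g h i, dg (g * h) i = dg g i * dg h i := by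
    intro g h i
    simp only [hdgdef]
    split_ifs with hh <;> simp
  have hdvd := free_action_dvd (X := Matrix (Fin n) (Fin n) F) (G := ↥I → Fˣ)
    (fun g A => Matrix.of fun i j => dg g i * dg g j * A i j) ?_ ?_ fib ?_ ?_
  · rw [Fintype.card_fun, Fintype.card_units, Fintype.card_coe, hIcard] at hdvd
    exact hdvd
  · -- identity
    intro A
    ext i j
    simp [hdg_one]
  · -- composition
    intro g h A
    ext i j
    simp only [Matrix.of_apply, hdg_mul]
    ring
  · -- invariance
    intro g A hA
    obtain ⟨⟨hAs, hAr, hAd⟩, hAsupp⟩ := memfib.1 hA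
    apply memfib.2
    refine ⟨⟨?_, ?_, ?_⟩, ?_⟩
    · ext i j
      show dg g j * dg g i * A j i = dg g i * dg g j * A i j
      rw [hAs.apply i j]; ring
    · -- rank
      show (Matrix.of fun i j => dg g i * dg g j * A i j).rank = 2 * s
      have hfact : (Matrix.of fun i j => dg g i * dg g j * A i j) =
          Matrix.diagonal (dg g) * A * Matrix.diagonal (dg g) := by
        ext i j
        rw [Matrix.mul_diagonal, Matrix.diagonal_mul]
        simp only [Matrix.of_apply]
        ring
      have hdet : IsUnit (Matrix.diagonal (dg g)).det := by
        rw [Matrix.det_diagonal]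
        exact isUnit_iff_ne_zero.2 (Finset.prod_ne_zero_iff.2 (fun i _ => hdg_ne g i))
      rw [hfact, Matrix.rank_mul_eq_left_of_isUnit_det _ _ hdet,
        Matrix.rank_mul_eq_right_of_isUnit_det _ _ hdet]
      exact hAr
    · intro i
      show dg g i * dg g i * A i i = 0
      rw [hAd i, mul_zero]
    · -- support
      rw [← hAsupp]
      ext i j
      show suppM _ i j = suppM A i j
      rcases eq_or_ne (A i j) 0 with h | h
      · rw [suppM_eq_zero_iff.2 (show (Matrix.of fun i j => dg g i * dg g j * A i j) i j = 0
          from by simp [h]), suppM_eq_zero_iff.2 h]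
      · rw [suppM_eq_one_iff.2 h, suppM_eq_one_iff.2 (show
          (Matrix.of fun i j => dg g i * dg g j * A i j) i j ≠ 0 from ?_)]
        simp only [Matrix.of_apply]
        exact mul_ne_zero (mul_ne_zero (hdg_ne g i) (hdg_ne g j)) h
  · -- freeness
    intro g A hA hfix
    obtain ⟨⟨hAs, hAr, hAd⟩, hAsupp⟩ := memfib.1 hA
    have hedge : ∀ a b, S a b ≠ 0 → dg g a * dg g b = 1 := by
      intro a b hab
      have hAab : A a b ≠ 0 := (hsupp_iff hA a b).2 hab
      have := congrFun (congrFun hfix a) b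
      simp only [Matrix.of_apply] at this
      have h2 : (dg g a * dg g b) * A a b = 1 * A a b := by rw [one_mul]; exact this
      exact mul_right_cancel₀ hAab h2
    have hall : ∀ i, dg g i = 1 := by
      intro i
      by_cases hi : i ∈ I
      · have hiI₀ : i ∈ I₀ := hIsub hi
        simp only [hI₀def, Finset.mem_filter] at hiI₀
        obtain ⟨hiV, hirep⟩ := hiI₀
        set r := mrep S i with hr
        have hrnotI : r ∉ I := by
          intro hrI
          have := hIsub hrI
          simp only [hI₀def, Finset.mem_filter] at this
          exact this.2 (mrep_idem hSsym i)
        have hdr : dg g r = 1 := by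
          simp only [hdgdef]; exact dif_neg hrnotI
        exact mreach_propagate hedge hdr (mreach_symm hSsym (mreach_mrep S i))
      · simp only [hdgdef]; exact dif_neg hi
    funext x
    have := hall (x : Fin n)
    simp only [hdgdef] at this
    rw [dif_pos x.2] at this
    have hx : g ⟨(x : Fin n), x.2⟩ = 1 := Units.val_eq_one.1 this
    rw [show (⟨(x : Fin n), x.2⟩ : ↥I) = x from Subtype.ext rfl] at hx
    exact hx

end NonMatchDvd

section Transfer
variable {n : ℕ}

/-- Transfer between ℕ-valued 0/1 matching matrices and `F`-valued matching patterns. -/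
noncomputable def matchEquiv (s : ℕ) :
    {A : Matrix (Fin n) (Fin n) ℕ //
        A.IsSymm ∧ (∀ i j, A i j = 0 ∨ A i j = 1) ∧ (∀ i, A i i = 0) ∧
        Nat.card {p : Fin n × Fin n // A p.1 p.2 = 1} = 2 * s ∧
        (∀ i j j', A i j = 1 → A i j' = 1 → j = j') ∧
        (∀ i i' j, A i j = 1 → A i' j = 1 → i = i')} ≃
      {S : Matrix (Fin n) (Fin n) F // IsMatch s S} := by
  classical
  have key : ∀ (M : Matrix (Fin n) (Fin n) ℕ), (∀ i j, M i j = 0 ∨ M i j = 1) →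
      ∀ i j, ((M i j : ℕ) : F) = 1 ↔ M i j = 1 := by
    intro M h01 i j
    rcases h01 i j with h | h <;> rw [h] <;> simp
  refine ⟨fun M => ⟨Matrix.of fun i j => ((M.1 i j : ℕ) : F), ?_⟩,
    fun S => ⟨Matrix.of fun i j => if S.1 i j = 0 then (0 : ℕ) else 1, ?_⟩, ?_, ?_⟩
  · obtain ⟨M, hsym, h01, hdiag, hcount, hrow, hcol⟩ := M
    have hiff := key M h01
    refine ⟨?_, ?_, ?_, ?_, ?_, ?_⟩
    · ext i j
      show ((M j i : ℕ) : F) = ((M i j : ℕ) : F)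
      rw [hsym.apply i j]
    · intro i j
      rcases h01 i j with h | h <;> simp [h]
    · intro i
      simp [hdiag i]
    · refine Eq.trans ?_ hcount
      apply Nat.card_congr
      apply Equiv.subtypeEquivRight
      intro p
      exact hiff p.1 p.2
    · intro i j j' h1 h2
      exact hrow i j j' ((hiff i j).1 h1) ((hiff i j').1 h2)
    · intro i i' j h1 h2
      exact hcol i i' j ((hiff i j).1 h1) ((hiff i' j).1 h2)
  · obtain ⟨S, hsym, h01, hdiag, hcount, hrow, hcol⟩ := S
    have hiff : ∀ i j, (if S i j = 0 then (0 : ℕ) else 1) = 1 ↔ S i j = 1 := by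
      intro i j
      rcases h01 i j with h | h <;> simp [h]
    refine ⟨?_, ?_, ?_, ?_, ?_, ?_⟩
    · ext i j
      show (if S j i = 0 then (0 : ℕ) else 1) = (if S i j = 0 then (0 : ℕ) else 1)
      rw [hsym.apply i j]
    · intro i j
      dsimp only [Matrix.of_apply]
      split_ifs <;> simp
    · intro i
      simp [hdiag i]
    · refine Eq.trans ?_ hcount
      apply Nat.card_congr
      apply Equiv.subtypeEquivRight
      intro p
      exact hiff p.1 p.2
    · intro i j j' h1 h2
      exact hrow i j j' ((hiff i j).1 h1) ((hiff i j').1 h2)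
    · intro i i' j h1 h2
      exact hcol i i' j ((hiff i j).1 h1) ((hiff i' j).1 h2)
  · rintro ⟨M, hsym, h01, hrest⟩
    apply Subtype.ext
    ext i j
    show (if ((M i j : ℕ) : F) = 0 then (0 : ℕ) else 1) = M i j
    rcases h01 i j with h | h <;> simp [h]
  · rintro ⟨S, hsym, h01, hrest⟩
    apply Subtype.ext
    ext i j
    show (((if S i j = 0 then (0 : ℕ) else 1) : ℕ) : F) = S i j
    rcases h01 i j with h | h
    · simp [h]
    · rw [if_neg (by rw [h]; exact one_ne_zero), h]
      simp

end Transfer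

theorem stmt19' (F : Type) [Field F] [Fintype F] (q : ℕ) (hq : Fintype.card F = q)
    (hodd : Odd q) (n s : ℕ) (hs : 2 * s ≤ n) :
    Nat.card {A : Matrix (Fin n) (Fin n) F //
        A.IsSymm ∧ A.rank = 2 * s ∧ ∀ i, A i i = 0} ≡
      Nat.card {A : Matrix (Fin n) (Fin n) ℕ //
        A.IsSymm ∧ (∀ i j, A i j = 0 ∨ A i j = 1) ∧ (∀ i, A i i = 0) ∧
        Nat.card {p : Fin n × Fin n // A p.1 p.2 = 1} = 2 * s ∧
        (∀ i j j', A i j = 1 → A i j' = 1 → j = j') ∧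
        (∀ i i' j, A i j = 1 → A i' j = 1 → i = i')} * (q - 1) ^ s
      [MOD (q - 1) ^ (s + 1)] := by
  classical
  subst hq
  set L := univ.filter (fun A : Matrix (Fin n) (Fin n) F =>
    A.IsSymm ∧ A.rank = 2 * s ∧ ∀ i, A i i = 0) with hLdef
  have hLcard : Nat.card {A : Matrix (Fin n) (Fin n) F //
      A.IsSymm ∧ A.rank = 2 * s ∧ ∀ i, A i i = 0} = L.card := by
    rw [Nat.card_eq_fintype_card, Fintype.card_subtype]
  have hRcard : Nat.card {A : Matrix (Fin n) (Fin n) ℕ //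
        A.IsSymm ∧ (∀ i j, A i j = 0 ∨ A i j = 1) ∧ (∀ i, A i i = 0) ∧
        Nat.card {p : Fin n × Fin n // A p.1 p.2 = 1} = 2 * s ∧
        (∀ i j j', A i j = 1 → A i j' = 1 → j = j') ∧
        (∀ i i' j, A i j = 1 → A i' j = 1 → i = i')} =
      (univ.filter (fun S : Matrix (Fin n) (Fin n) F => IsMatch s S)).card := by
    rw [Nat.card_congr (matchEquiv (F := F) (n := n) s), Nat.card_eq_fintype_card,
      Fintype.card_subtype]
  rw [hLcard, hRcard]
  -- fiber decomposition over supports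
  have hfib : L.card = ∑ S ∈ (univ : Finset (Matrix (Fin n) (Fin n) F)),
      (L.filter (fun A => suppM A = S)).card := by
    apply Finset.card_eq_sum_card_fiberwise
    intro A _
    exact Finset.mem_univ _
  have hsplit : ∑ S ∈ (univ : Finset (Matrix (Fin n) (Fin n) F)),
      (L.filter (fun A => suppM A = S)).card =
      (∑ S ∈ univ.filter (fun S : Matrix (Fin n) (Fin n) F => IsMatch s S),
        (L.filter (fun A => suppM A = S)).card) +
      (∑ S ∈ univ.filter (fun S : Matrix (Fin n) (Fin n) F => ¬ IsMatch s S),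
        (L.filter (fun A => suppM A = S)).card) :=
    (Finset.sum_filter_add_sum_filter_not _ _ _).symm
  have hmatchfib : ∀ S ∈ univ.filter (fun S : Matrix (Fin n) (Fin n) F => IsMatch s S),
      (L.filter (fun A => suppM A = S)).card = (Fintype.card F - 1) ^ s := by
    intro S hS
    have hm : IsMatch s S := by
      simp only [Finset.mem_filter, Finset.mem_univ, true_and] at hS
      exact hS
    have heq : L.filter (fun A => suppM A = S) =
        univ.filter (fun A : Matrix (Fin n) (Fin n) F => A.IsSymm ∧ suppM A = S) := by
      ext A
      simp only [hLdef, Finset.mem_filter, Finset.mem_univ, true_and]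
      constructor
      · rintro ⟨⟨h1, _, _⟩, h4⟩
        exact ⟨h1, h4⟩
      · rintro ⟨h1, h4⟩
        exact ⟨⟨h1, match_rank hm h1 h4, match_diag hm h4⟩, h4⟩
    rw [heq, match_count hm]
  have hsum1 : ∑ S ∈ univ.filter (fun S : Matrix (Fin n) (Fin n) F => IsMatch s S),
      (L.filter (fun A => suppM A = S)).card =
      (univ.filter (fun S : Matrix (Fin n) (Fin n) F => IsMatch s S)).card *
        (Fintype.card F - 1) ^ s := by
    rw [Finset.sum_congr rfl hmatchfib, Finset.sum_const, smul_eq_mul]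
  have hdvd : (Fintype.card F - 1) ^ (s + 1) ∣
      ∑ S ∈ univ.filter (fun S : Matrix (Fin n) (Fin n) F => ¬ IsMatch s S),
        (L.filter (fun A => suppM A = S)).card := by
    apply Finset.dvd_sum
    intro S hS
    have hnm : ¬ IsMatch s S := by
      simp only [Finset.mem_filter, Finset.mem_univ, true_and] at hS
      exact hS
    exact nonmatch_dvd hnm
  rw [hfib, hsplit, hsum1]
  have h0 : (∑ S ∈ univ.filter (fun S : Matrix (Fin n) (Fin n) F => ¬ IsMatch s S),
      (L.filter (fun A => suppM A = S)).card) ≡ 0 [MOD (Fintype.card F - 1) ^ (s + 1)] :=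
    (Nat.modEq_zero_iff_dvd).2 hdvd
  calc (univ.filter (fun S : Matrix (Fin n) (Fin n) F => IsMatch s S)).card *
        (Fintype.card F - 1) ^ s +
      (∑ S ∈ univ.filter (fun S : Matrix (Fin n) (Fin n) F => ¬ IsMatch s S),
        (L.filter (fun A => suppM A = S)).card)
      ≡ (univ.filter (fun S : Matrix (Fin n) (Fin n) F => IsMatch s S)).card *
        (Fintype.card F - 1) ^ s + 0 [MOD (Fintype.card F - 1) ^ (s + 1)] :=
        Nat.ModEq.add_left _ h0
    _ = (univ.filter (fun S : Matrix (Fin n) (Fin n) F => IsMatch s S)).card *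
        (Fintype.card F - 1) ^ s := by rw [add_zero]

open Matrix

theorem stmt19 (F : Type) [Field F] [Fintype F] (q : ℕ) (hq : Fintype.card F = q)
    (hodd : Odd q) (n s : ℕ) (hs : 2 * s ≤ n) :
    Nat.card {A : Matrix (Fin n) (Fin n) F //
        A.IsSymm ∧ A.rank = 2 * s ∧ ∀ i, A i i = 0} ≡
      Nat.card {A : Matrix (Fin n) (Fin n) ℕ //
        A.IsSymm ∧ (∀ i j, A i j = 0 ∨ A i j = 1) ∧ (∀ i, A i i = 0) ∧
        Nat.card {p : Fin n × Fin n // A p.1 p.2 = 1} = 2 * s ∧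
        (∀ i j j', A i j = 1 → A i j' = 1 → j = j') ∧
        (∀ i i' j, A i j = 1 → A i' j = 1 → i = i')} * (q - 1) ^ s
      [MOD (q - 1) ^ (s + 1)] := by
  exact stmt19' F q hq hodd n s hs
end
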